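/- arXiv:2602.15739 — 3 statements merged into one kernel-verified Lean document; each statement's English description precedes it below -/
import Mathlib

section
/- Let N be a WF-net such that from every marking reachable from the initial marking [source] there exists a firing sequence leading to the marking [sink]. Then [sink] is the only marking reachable from [source] that contains at least one token in the sink place (i.e., the option to complete implies proper completion). -/
/-!
Common formalization of Petri nets, workflow nets (WF-nets), POWL 2.0 models,
and the WF-net-to-POWL conversion algorithm.
-/

noncomputable section
attribute [local instance] Classical.propDecidable

/-- A Petri-net-like structure over natural-number nodes, with designated
source/sink places and a labeling of transitions (`none` = silent τ). -/
structure Net where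
  places : Finset ℕ
  transitions : Finset ℕ
  flow : Finset (ℕ × ℕ)
  label : ℕ → Option ℕ
  source : ℕ
  sink : ℕ

abbrev Marking := ℕ → ℕ

namespace Net

/-- Pre-set of a node. -/
def pre (N : Net) (x : ℕ) : Finset ℕ := (N.flow.filter fun e => e.2 = x).image Prod.fst

/-- Post-set of a node. -/
def post (N : Net) (x : ℕ) : Finset ℕ := (N.flow.filter fun e => e.1 = x).image Prod.snd

/-- `N` is a Petri net: places and transitions are finite disjoint sets and
the flow only connects places to transitions and vice versa. -/
def IsPetri (N : Net) : Prop :=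
  Disjoint N.places N.transitions ∧
  ∀ e ∈ N.flow, (e.1 ∈ N.places ∧ e.2 ∈ N.transitions) ∨ (e.1 ∈ N.transitions ∧ e.2 ∈ N.places)

/-- Directed-path (reflexive-transitive) reachability along the flow relation. -/
def pathRel (N : Net) : ℕ → ℕ → Prop := Relation.ReflTransGen (fun a b => (a, b) ∈ N.flow)

/-- `N` is a workflow net: a Petri net with a unique source place, a unique
sink place, and every node on a path from the source to the sink. -/
def IsWF (N : Net) : Prop :=
  N.IsPetri ∧
  N.source ∈ N.places ∧ N.sink ∈ N.places ∧
  (∀ p ∈ N.places, N.pre p = ∅ ↔ p = N.source) ∧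
  (∀ p ∈ N.places, N.post p = ∅ ↔ p = N.sink) ∧
  (∀ x ∈ N.places ∪ N.transitions, N.pathRel N.source x ∧ N.pathRel x N.sink)

/-- A transition is enabled at a marking if every place of its pre-set holds a token. -/
def enabled (N : Net) (t : ℕ) (M : Marking) : Prop :=
  t ∈ N.transitions ∧ ∀ p ∈ N.pre t, 1 ≤ M p

/-- Firing an enabled transition consumes one token from each input place and
produces one token in each output place. -/
def fire (N : Net) (t : ℕ) (M M' : Marking) : Prop :=
  N.enabled t M ∧
  ∀ p, M' p + (if p ∈ N.pre t then 1 else 0) = M p + (if p ∈ N.post t then 1 else 0)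

/-- `N.firingSeq M σ M'`: firing the sequence σ of transitions leads from M to M'. -/
def firingSeq (N : Net) : Marking → List ℕ → Marking → Prop
  | M, [], M' => M' = M
  | M, t :: σ, M' => ∃ M₁, N.fire t M M₁ ∧ N.firingSeq M₁ σ M'

/-- A marking is reachable from another if some firing sequence leads to it. -/
def reachable (N : Net) (M M' : Marking) : Prop := ∃ σ, N.firingSeq M σ M'

/-- The initial marking [source]. -/
def initM (N : Net) : Marking := fun p => if p = N.source then 1 else 0

/-- The final marking [sink]. -/
def finalM (N : Net) : Marking := fun p => if p = N.sink then 1 else 0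

/-- Soundness: no dead transitions, option to complete, proper completion. -/
def Sound (N : Net) : Prop :=
  (∀ t ∈ N.transitions, ∃ M, N.reachable N.initM M ∧ N.enabled t M) ∧
  (∀ M, N.reachable N.initM M → N.reachable M N.finalM) ∧
  (∀ M, N.reachable N.initM M → 1 ≤ M N.sink → M = N.finalM)

/-- Safeness: each place holds at most one token in every reachable marking. -/
def Safe (N : Net) : Prop :=
  ∀ M, N.reachable N.initM M → ∀ p, M p ≤ 1

/-- The language: label sequences (τ omitted) of firing sequences from [source] to [sink]. -/
def lang (N : Net) : Set (List ℕ) :=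
  { w | ∃ σ, N.firingSeq N.initM σ N.finalM ∧ w = σ.filterMap N.label }

/-- The entry points ◦T' of a set of transitions T'. -/
def entry (N : Net) (T' : Finset ℕ) : Finset ℕ :=
  N.places.filter fun p =>
    (N.post p ∩ T').Nonempty ∧ (p = N.source ∨ (N.pre p ∩ (N.transitions \ T')).Nonempty)

/-- The exit points T'◦ of a set of transitions T'. -/
def exit (N : Net) (T' : Finset ℕ) : Finset ℕ :=
  N.places.filter fun p =>
    (N.pre p ∩ T').Nonempty ∧ (p = N.sink ∨ (N.post p ∩ (N.transitions \ T')).Nonempty)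

/-- Two places are equivalent with respect to T'. -/
def equivWrt (N : Net) (T' : Finset ℕ) (p p' : ℕ) : Prop :=
  N.pre p ∩ T' = N.pre p' ∩ T' ∧ N.post p ∩ T' = N.post p' ∩ T'

/-- The places adjacent to some transition of T' (written P|_{T'}). -/
def adjP (N : Net) (T' : Finset ℕ) : Finset ℕ :=
  N.places.filter fun p => ((N.pre p ∪ N.post p) ∩ T').Nonempty

/-- A natural number larger than every node of N. -/
def freshBase (N : Net) : ℕ :=
  ((N.places ∪ N.transitions ∪ {N.source, N.sink}).sup id) + 1

end Net

/-- `G : Fin n → Finset ℕ` is a partition of the transitions of N into n nonempty parts. -/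
def IsPartition (N : Net) {n : ℕ} (G : Fin n → Finset ℕ) : Prop :=
  (∀ i, (G i).Nonempty) ∧
  (∀ i j, i ≠ j → Disjoint (G i) (G j)) ∧
  Finset.univ.biUnion G = N.transitions

/-- A conflict-hiding partition. -/
def ConflictHiding (N : Net) {n : ℕ} (G : Fin n → Finset ℕ) : Prop :=
  IsPartition N G ∧
  (∀ p, ∀ i j : Fin n, p ∈ N.entry (G i) → p ∈ N.entry (G j) → i = j) ∧
  (∀ p, ∀ i j : Fin n, p ∈ N.exit (G i) → p ∈ N.exit (G j) → i = j) ∧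
  (∀ i : Fin n, ∀ p ∈ N.entry (G i), ∀ p' ∈ N.entry (G i), N.equivWrt (G i) p p') ∧
  (∀ i : Fin n, ∀ p ∈ N.exit (G i), ∀ p' ∈ N.exit (G i), N.equivWrt (G i) p p')

/-- A concurrency-hiding partition: each part has exactly one entry and one exit point. -/
def ConcurrencyHiding (N : Net) {n : ℕ} (G : Fin n → Finset ℕ) : Prop :=
  IsPartition N G ∧ ∀ i, (N.entry (G i)).card = 1 ∧ (N.exit (G i)).card = 1

/-- Normalize(N, p_s, p_e): insert a fresh source (resp. sink) place connected
to p_s (resp. from p_e) through a fresh τ-transition whenever needed. -/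
def Normalize (N : Net) (ps pe : ℕ) : Net :=
  let b := N.freshBase
  let needS := (N.pre ps).Nonempty
  let needE := (N.post pe).Nonempty
  { places := N.places ∪ (if needS then {b} else ∅) ∪ (if needE then {b+2} else ∅)
    transitions := N.transitions ∪ (if needS then {b+1} else ∅) ∪ (if needE then {b+3} else ∅)
    flow := N.flow ∪ (if needS then {(b, b+1), (b+1, ps)} else ∅)
                   ∪ (if needE then {(pe, b+3), (b+3, b+2)} else ∅)
    label := fun x => if x = b+1 ∨ x = b+3 then none else N.label x
    source := if needS then b else ps
    sink := if needE then b+2 else pe }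

/-- The raw partial-order projection of N onto a part T' (before normalization). -/
def poprojectRaw (N : Net) (T' : Finset ℕ) : Net :=
  let b := N.freshBase
  let ps := b
  let pe := b + 1
  let keptP := (N.adjP T' \ (N.entry T' ∪ N.exit T')) ∪ {ps, pe}
  { places := keptP
    transitions := T'
    flow :=
      (N.flow.filter fun e => (e.1 ∈ keptP ∧ e.2 ∈ T') ∨ (e.1 ∈ T' ∧ e.2 ∈ keptP))
      ∪ ((T'.filter fun t => (N.entry T' ∩ N.pre t).Nonempty).image fun t => (ps, t))
      ∪ ((T'.filter fun t => (N.entry T' ∩ N.post t).Nonempty).image fun t => (t, ps))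
      ∪ ((T'.filter fun t => (N.exit T' ∩ N.pre t).Nonempty).image fun t => (pe, t))
      ∪ ((T'.filter fun t => (N.exit T' ∩ N.post t).Nonempty).image fun t => (t, pe))
    label := N.label
    source := ps
    sink := pe }

/-- The partial-order projection poproject(N, T'). -/
def poproject (N : Net) (T' : Finset ℕ) : Net :=
  let R := poprojectRaw N T'
  Normalize R R.source R.sink

/-- The raw choice-graph projection of N onto a part T' (before normalization). -/
def cgprojectRaw (N : Net) (T' : Finset ℕ) : Net :=
  let keptP := N.adjP T'
  { places := keptP
    transitions := T'
    flow := N.flow.filter fun e => (e.1 ∈ keptP ∧ e.2 ∈ T') ∨ (e.1 ∈ T' ∧ e.2 ∈ keptP)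
    label := N.label
    source := (N.entry T').sup id
    sink := (N.exit T').sup id }

/-- The choice-graph projection cgproject(N, T'). -/
def cgproject (N : Net) (T' : Finset ℕ) : Net :=
  let R := cgprojectRaw N T'
  Normalize R R.source R.sink

/-- The execution order order(N,G): i ⊏ j iff T_i◦ ∩ ◦T_j ≠ ∅.
(Also the edge relation of the execution flow flow(N,G).) -/
def execOrder (N : Net) {n : ℕ} (G : Fin n → Finset ℕ) (i j : Fin n) : Prop :=
  (N.exit (G i) ∩ N.entry (G j)).Nonempty

/-- Start edges of flow(N,G): parts whose entry points contain the source of N. -/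
def cgStart (N : Net) {n : ℕ} (G : Fin n → Finset ℕ) : Set (Fin n) :=
  { i | N.source ∈ N.entry (G i) }

/-- End edges of flow(N,G): parts whose exit points contain the sink of N. -/
def cgEnd (N : Net) {n : ℕ} (G : Fin n → Finset ℕ) : Set (Fin n) :=
  { i | N.sink ∈ N.exit (G i) }

/-! ### POWL 2.0 models -/

/-- POWL 2.0 models: labeled transitions, partial-order nodes, and
choice-graph nodes.  A choice graph over `Fin n` is represented by the set of
successors of the start node, the set of predecessors of the end node, and the
edge relation between the inner nodes. -/
inductive POWL : Type where
  | ptrans : Option ℕ → POWL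
  | po : (n : ℕ) → (Fin n → Fin n → Prop) → (Fin n → POWL) → POWL
  | cg : (n : ℕ) → Set (Fin n) → Set (Fin n) → (Fin n → Fin n → Prop) → (Fin n → POWL) → POWL

/-- `p` is a path of a choice graph: nonempty, it starts at a successor of the
start node, ends at a predecessor of the end node, and follows edges. -/
def CGPath {n : ℕ} (sE eE : Set (Fin n)) (ed : Fin n → Fin n → Prop) (p : List (Fin n)) : Prop :=
  ∃ h : p ≠ [], p.head h ∈ sE ∧ p.getLast h ∈ eE ∧ p.Chain' ed

/-- Validity of a choice graph: start is the unique node with no incoming edge,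
end is the unique node with no outgoing edge, and every node lies on a directed
path from start to end. -/
def IsChoiceGraph {n : ℕ} (sE eE : Set (Fin n)) (ed : Fin n → Fin n → Prop) : Prop :=
  sE.Nonempty ∧ eE.Nonempty ∧
  (∀ i, i ∈ sE ∨ ∃ j, ed j i) ∧
  (∀ i, i ∈ eE ∨ ∃ j, ed i j) ∧
  (∀ i, ∃ p, CGPath sE eE ed p ∧ i ∈ p)

/-- σ is an order-preserving shuffle of the sequences `f 0, …, f (n-1)` w.r.t. `rel`. -/
def IsShuffle {n : ℕ} (rel : Fin n → Fin n → Prop) (f : Fin n → List ℕ) (σ : List ℕ) : Prop :=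
  ∃ w : List (Fin n × ℕ),
    σ = w.map Prod.snd ∧
    (∀ i, (w.filter fun x => x.1 = i).map Prod.snd = f i) ∧
    ∀ a b : Fin w.length, rel (w.get a).1 (w.get b).1 → (a : ℕ) < (b : ℕ)

/-- Concatenation of a list of languages. -/
def ConcatLangs : List (Set (List ℕ)) → Set (List ℕ)
  | [] => {[]}
  | L :: Ls => { σ | ∃ u v, u ∈ L ∧ v ∈ ConcatLangs Ls ∧ σ = u ++ v }

/-- The language of a POWL 2.0 model. -/
def POWL.lang : POWL → Set (List ℕ)
  | .ptrans none => {[]}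
  | .ptrans (some a) => {[a]}
  | .po n rel ch => { σ | ∃ f : Fin n → List ℕ, (∀ i, f i ∈ (ch i).lang) ∧ IsShuffle rel f σ }
  | .cg n sE eE ed ch =>
      { σ | ∃ p, CGPath sE eE ed p ∧ σ ∈ ConcatLangs (p.map fun i => (ch i).lang) }

/-- Well-formedness of a POWL 2.0 model: partial-order nodes carry strict
partial orders over at least two children, choice-graph nodes carry valid
choice graphs over at least two children. -/
def POWL.WF : POWL → Prop
  | .ptrans _ => True
  | .po n rel ch => 2 ≤ n ∧ Irreflexive rel ∧ Transitive rel ∧ ∀ i, (ch i).WF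
  | .cg n sE eE ed ch => 2 ≤ n ∧ IsChoiceGraph sE eE ed ∧ ∀ i, (ch i).WF

/-! ### The conversion algorithm -/

/-- Transition-to-node reachability via the transitive closure of the flow. -/
def ttr (N : Net) (a b : ℕ) : Prop := Relation.TransGen (fun x y => (x, y) ∈ N.flow) a b

/-- The merge group of an XOR-split place p in popart. -/
def poSplitGroup (N : Net) (p : ℕ) : Finset ℕ :=
  N.transitions.filter fun t => ∃ t₁ ∈ N.post p, ∃ t₂ ∈ N.post p, ttr N t₁ t ∧ ¬ ttr N t₂ t

/-- The merge group of an XOR-join place p in popart. -/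
def poJoinGroup (N : Net) (p : ℕ) : Finset ℕ :=
  N.transitions.filter fun t => ∃ t₁ ∈ N.pre p, ∃ t₂ ∈ N.pre p, ttr N t t₁ ∧ ¬ ttr N t t₂

/-- Transitions related by some merge step of popart. -/
def popartRel (N : Net) (t t' : ℕ) : Prop :=
  ∃ p ∈ N.places,
    (1 < (N.post p).card ∧ t ∈ poSplitGroup N p ∧ t' ∈ poSplitGroup N p) ∨
    (1 < (N.pre p).card ∧ t ∈ poJoinGroup N p ∧ t' ∈ poJoinGroup N p)

/-- The part of popart(N) containing t: the equivalence class of t under the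
equivalence closure of all popart merge steps. -/
def popartClass (N : Net) (t : ℕ) : Finset ℕ :=
  N.transitions.filter fun t' => Relation.EqvGen (popartRel N) t t'

/-- `G` enumerates the partition popart(N). -/
def IsPopart (N : Net) {n : ℕ} (G : Fin n → Finset ℕ) : Prop :=
  (∀ i, ∃ t ∈ N.transitions, G i = popartClass N t) ∧
  (∀ t ∈ N.transitions, ∃ i, t ∈ G i) ∧
  Function.Injective G

/-- Forward restricted reachability: t is reachable from place p via a path avoiding t_stop. -/
def reachAvoid (N : Net) (tstop p t : ℕ) : Prop :=
  ∃ q, Relation.ReflTransGen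
        (fun a b => ∃ u, u ≠ tstop ∧ (a, u) ∈ N.flow ∧ (u, b) ∈ N.flow) p q ∧
    t ≠ tstop ∧ (q, t) ∈ N.flow

/-- Backward restricted reachability: place p is reachable from t via a path avoiding t_stop. -/
def backReachAvoid (N : Net) (tstop p t : ℕ) : Prop :=
  ∃ q, t ≠ tstop ∧ (t, q) ∈ N.flow ∧
    Relation.ReflTransGen
      (fun a b => ∃ u, u ≠ tstop ∧ (a, u) ∈ N.flow ∧ (u, b) ∈ N.flow) q p

/-- The merge group of an AND-split transition in cgpart. -/
def cgSplitGroup (N : Net) (ts : ℕ) : Finset ℕ :=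
  {ts} ∪ (N.transitions.filter fun t =>
    ∃ p₁ ∈ N.post ts, ∃ p₂ ∈ N.post ts, reachAvoid N ts p₁ t ∧ ¬ reachAvoid N ts p₂ t)

/-- The merge group of an AND-join transition in cgpart. -/
def cgJoinGroup (N : Net) (tj : ℕ) : Finset ℕ :=
  {tj} ∪ (N.transitions.filter fun t =>
    ∃ p₁ ∈ N.pre tj, ∃ p₂ ∈ N.pre tj, backReachAvoid N tj p₁ t ∧ ¬ backReachAvoid N tj p₂ t)

/-- Transitions related by some merge step of cgpart. -/
def cgpartRel (N : Net) (t t' : ℕ) : Prop :=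
  ∃ u ∈ N.transitions,
    (1 < (N.post u).card ∧ t ∈ cgSplitGroup N u ∧ t' ∈ cgSplitGroup N u) ∨
    (1 < (N.pre u).card ∧ t ∈ cgJoinGroup N u ∧ t' ∈ cgJoinGroup N u)

/-- The part of cgpart(N) containing t. -/
def cgpartClass (N : Net) (t : ℕ) : Finset ℕ :=
  N.transitions.filter fun t' => Relation.EqvGen (cgpartRel N) t t'

/-- `G` enumerates the partition cgpart(N). -/
def IsCgpart (N : Net) {n : ℕ} (G : Fin n → Finset ℕ) : Prop :=
  (∀ i, ∃ t ∈ N.transitions, G i = cgpartClass N t) ∧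
  (∀ t ∈ N.transitions, ∃ i, t ∈ G i) ∧
  Function.Injective G

/-- Isomorphism of labeled Petri nets. -/
def NetIso (N₁ N₂ : Net) : Prop :=
  ∃ fP fT : ℕ → ℕ,
    Set.BijOn fP ↑N₁.places ↑N₂.places ∧
    Set.BijOn fT ↑N₁.transitions ↑N₂.transitions ∧
    (∀ p ∈ N₁.places, ∀ t ∈ N₁.transitions,
      ((p, t) ∈ N₁.flow ↔ (fP p, fT t) ∈ N₂.flow) ∧
      ((t, p) ∈ N₁.flow ↔ (fT t, fP p) ∈ N₂.flow)) ∧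
    (∀ t ∈ N₁.transitions, N₁.label t = N₂.label (fT t))

/-- The partial-order decomposition step of the algorithm applies to N. -/
def PoStepApplies (N : Net) : Prop :=
  ∃ (n : ℕ) (G : Fin n → Finset ℕ),
    IsPopart N G ∧ 2 ≤ n ∧ ConflictHiding N G ∧ ∀ i, ¬ NetIso (poproject N (G i)) N

/-- `Converts N ψ`: the algorithm ConvertNetToPOWL converts the WF-net N into
the POWL model ψ without invoking the fall-through at any level of recursion. -/
inductive Converts : Net → POWL → Prop where
  | base (N : Net) (t : ℕ) :
      N.transitions = {t} → N.places = {N.source, N.sink} →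
      N.flow = {(N.source, t), (t, N.sink)} →
      Converts N (POWL.ptrans (N.label t))
  | poCase (N : Net) (n : ℕ) (G : Fin n → Finset ℕ) (ψ : Fin n → POWL) :
      IsPopart N G → 2 ≤ n → ConflictHiding N G →
      (∀ i, ¬ NetIso (poproject N (G i)) N) →
      (∀ i, Converts (poproject N (G i)) (ψ i)) →
      Converts N (POWL.po n (Relation.TransGen (execOrder N G)) ψ)
  | cgCase (N : Net) (n : ℕ) (G : Fin n → Finset ℕ) (ψ : Fin n → POWL) :
      ¬ PoStepApplies N →
      IsCgpart N G → 2 ≤ n → ConcurrencyHiding N G →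
      (∀ i, ¬ NetIso (cgproject N (G i)) N) →
      (∀ i, Converts (cgproject N (G i)) (ψ i)) →
      Converts N (POWL.cg n (cgStart N G) (cgEnd N G) (execOrder N G) ψ)

/-! ### Separable WF-nets -/

/-- The nets N and N' share no nodes. -/
def NodeDisjoint (N N' : Net) : Prop :=
  Disjoint (N.places ∪ N.transitions) (N'.places ∪ N'.transitions)

/-- The substitutive composition N_[t → N']. -/
def subst (N : Net) (t : ℕ) (N' : Net) : Net where
  places := N.places ∪ (N'.places \ {N'.source, N'.sink})
  transitions := (N.transitions \ {t}) ∪ N'.transitions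
  flow :=
    (N.flow.filter fun e => e.1 ≠ t ∧ e.2 ≠ t) ∪
    (N'.flow.filter fun e => e.1 ≠ N'.source ∧ e.2 ≠ N'.sink) ∪
    ((N.pre t) ×ˢ (N'.post N'.source)) ∪
    ((N'.pre N'.sink) ×ˢ (N.post t))
  label := fun x => if x ∈ N'.transitions then N'.label x else N.label x
  source := N.source
  sink := N.sink

/-- State machine: every transition has at most one input and one output place. -/
def IsStateMachine (N : Net) : Prop :=
  ∀ t ∈ N.transitions, (N.pre t).card ≤ 1 ∧ (N.post t).card ≤ 1

/-- Marked graph: every place has at most one input and one output transition. -/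
def IsMarkedGraph (N : Net) : Prop :=
  ∀ p ∈ N.places, (N.pre p).card ≤ 1 ∧ (N.post p).card ≤ 1

/-- The class of separable WF-nets. -/
inductive Separable : Net → Prop where
  | mg (N : Net) : N.IsWF → IsMarkedGraph N → Separable N
  | sm (N : Net) : N.IsWF → IsStateMachine N → Separable N
  | comp (N N' : Net) (t : ℕ) :
      Separable N → Separable N' → t ∈ N.transitions → NodeDisjoint N N' →
      Separable (subst N t N')

/-- Free-choice Petri net. -/
def FreeChoice (N : Net) : Prop :=
  ∀ t₁ ∈ N.transitions, ∀ t₂ ∈ N.transitions,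
    (N.pre t₁ ∩ N.pre t₂).Nonempty → N.pre t₁ = N.pre t₂

/-- A directed path in a Petri net: consecutive nodes are connected by the flow. -/
def DirPath (N : Net) (l : List ℕ) : Prop := l.Chain' fun a b => (a, b) ∈ N.flow

/-- Auxiliary: the sink has empty post-set. -/
lemma sink_post_empty (N : Net) (hWF : N.IsWF) : N.post N.sink = ∅ :=
  (hWF.2.2.2.2.1 N.sink hWF.2.2.1).mpr rfl

/-- Auxiliary: the sink is in no pre-set. -/
lemma sink_notMem_pre (N : Net) (hWF : N.IsWF) (t : ℕ) : N.sink ∉ N.pre t := by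
  intro h
  rcases Finset.mem_image.mp h with ⟨e, he, hfst⟩
  rcases Finset.mem_filter.mp he with ⟨hef, hsnd⟩
  have : e.2 ∈ N.post N.sink := by
    apply Finset.mem_image.mpr
    exact ⟨e, Finset.mem_filter.mpr ⟨hef, hfst⟩, rfl⟩
  rw [sink_post_empty N hWF] at this
  exact absurd this (Finset.notMem_empty _)

/-- Auxiliary: every transition has a nonempty post-set. -/
lemma trans_post_nonempty (N : Net) (hWF : N.IsWF) (t : ℕ) (ht : t ∈ N.transitions) :
    (N.post t).Nonempty := by
  have hpath : N.pathRel t N.sink :=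
    (hWF.2.2.2.2.2 t (Finset.mem_union_right _ ht)).2
  have htne : t ≠ N.sink := by
    intro h; subst h
    exact absurd hWF.2.2.1 (Finset.disjoint_right.mp hWF.1.1 ht)
  rcases Relation.ReflTransGen.cases_head hpath with h | ⟨b, hb, _⟩
  · exact absurd h htne
  · exact ⟨b, Finset.mem_image.mpr ⟨(t, b), Finset.mem_filter.mpr ⟨hb, rfl⟩, rfl⟩⟩

/-- Auxiliary: no transition can fire into the zero marking. -/
lemma no_fire_to_zero (N : Net) (hWF : N.IsWF) (t : ℕ) (M M' : Marking)
    (hf : N.fire t M M') (hz : ∀ p, M' p = 0) : False := by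
  obtain ⟨⟨ht, hen⟩, heq⟩ := hf
  obtain ⟨q, hq⟩ := trans_post_nonempty N hWF t ht
  have h := heq q
  rw [hz q, if_pos hq] at h
  by_cases hqp : q ∈ N.pre t
  · rw [if_pos hqp] at h
    have : M q = 0 := by omega
    have := hen q hqp; omega
  · rw [if_neg hqp] at h; omega

/-- Auxiliary: a firing sequence ending in the zero marking must start there. -/
lemma firingSeq_to_zero (N : Net) (hWF : N.IsWF) :
    ∀ (σ : List ℕ) (M Z : Marking), N.firingSeq M σ Z → (∀ p, Z p = 0) →
      ∀ p, M p = 0 := by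
  intro σ
  induction σ with
  | nil => intro M Z h hz p; rw [show Z = M from h] at hz; exact hz p
  | cons t σ' ih =>
      intro M Z h hz
      obtain ⟨M₁, hfire, hseq⟩ := h
      exact absurd (ih M₁ Z hseq hz) (fun h' => no_fire_to_zero N hWF t M M₁ hfire h')

/-- Auxiliary: removing a token from the sink preserves firing sequences. -/
lemma firingSeq_sub_sink (N : Net) (hWF : N.IsWF) :
    ∀ (σ : List ℕ) (M M' : Marking), 1 ≤ M N.sink → N.firingSeq M σ M' →
      N.firingSeq (fun p => M p - if p = N.sink then 1 else 0) σ
        (fun p => M' p - if p = N.sink then 1 else 0) := by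
  intro σ
  induction σ with
  | nil =>
      intro M M' _ h
      rw [show M' = M from h]
      rfl
  | cons t σ' ih =>
      intro M M' hM h
      obtain ⟨M₁, ⟨⟨ht, hen⟩, heq⟩, hseq⟩ := h
      have hsinkpre : N.sink ∉ N.pre t := sink_notMem_pre N hWF t
      have hM₁ : 1 ≤ M₁ N.sink := by
        have h := heq N.sink
        rw [if_neg hsinkpre] at h
        by_cases hpost : N.sink ∈ N.post t <;> simp [hpost] at h <;> omega
      refine ⟨fun p => M₁ p - if p = N.sink then 1 else 0, ⟨⟨ht, ?_⟩, ?_⟩, ih M₁ M' hM₁ hseq⟩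
      · intro p hp
        have hpne : p ≠ N.sink := fun h' => hsinkpre (h' ▸ hp)
        simp only [if_neg hpne]
        have := hen p hp; omega
      · intro p
        have h := heq p
        by_cases hps : p = N.sink
        · subst hps
          rw [if_neg hsinkpre] at h ⊢
          simp only [if_pos]
          omega
        · simp only [if_neg hps]
          omega

/-- In a WF-net, the option to complete implies proper
completion: if from every marking reachable from [source] the marking [sink]
is reachable, then [sink] is the only marking reachable from [source] that
contains at least one token in the sink place. -/
theorem option_to_complete_implies_proper_completion
    (N : Net) (hWF : N.IsWF)
    (hoption : ∀ M, N.reachable N.initM M → N.reachable M N.finalM) :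
    ∀ M, N.reachable N.initM M → 1 ≤ M N.sink → M = N.finalM := by
  intro M hreach hsink
  obtain ⟨σ, hσ⟩ := hoption M hreach
  have hsub := firingSeq_sub_sink N hWF σ M N.finalM hsink hσ
  have hz : ∀ p, (N.finalM p - if p = N.sink then 1 else 0) = 0 := by
    intro p
    unfold Net.finalM
    by_cases hp : p = N.sink <;> simp [hp]
  have hM0 : ∀ p, (M p - if p = N.sink then 1 else 0) = 0 :=
    firingSeq_to_zero N hWF σ _ _ hsub hz
  funext p
  have h := hM0 p
  unfold Net.finalM
  by_cases hp : p = N.sink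
  · subst hp; rw [if_pos rfl] at h ⊢; omega
  · simp only [if_neg hp] at h ⊢; omega

end
end

section
/- Let N = (P,T,F) be a safe and sound WF-net and let G = {T_1,…,T_n} be a concurrency-hiding partition of T. Then for every i with 1 ≤ i ≤ n, the choice graph projection cgproject(N,T_i) is a safe and sound WF-net. -/
/-!
Common formalization of Petri nets, workflow nets (WF-nets), POWL 2.0 models,
and the WF-net-to-POWL conversion algorithm.
-/

noncomputable section
attribute [local instance] Classical.propDecidable

/-! ### Auxiliary development for Statement 2 -/

namespace Net

theorem mem_pre_iff {N : Net} {a x : ℕ} : a ∈ N.pre x ↔ (a, x) ∈ N.flow := by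
  unfold Net.pre
  simp only [Finset.mem_image, Finset.mem_filter]
  constructor
  · rintro ⟨⟨u, v⟩, ⟨hmem, h2⟩, h1⟩
    simp only at h1 h2
    subst h1; subst h2; exact hmem
  · intro h
    exact ⟨(a, x), ⟨h, rfl⟩, rfl⟩

theorem mem_post_iff {N : Net} {a x : ℕ} : a ∈ N.post x ↔ (x, a) ∈ N.flow := by
  unfold Net.post
  simp only [Finset.mem_image, Finset.mem_filter]
  constructor
  · rintro ⟨⟨u, v⟩, ⟨hmem, h2⟩, h1⟩
    simp only at h1 h2
    subst h1; subst h2; exact hmem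
  · intro h
    exact ⟨(x, a), ⟨h, rfl⟩, rfl⟩

theorem fire_untouched {N : Net} {t : ℕ} {M M' : Marking} (h : N.fire t M M') {p : ℕ}
    (h1 : p ∉ N.pre t) (h2 : p ∉ N.post t) : M' p = M p := by
  have := h.2 p
  simp only [h1, h2, if_false] at this
  omega

theorem fire_exists {N : Net} {t : ℕ} {M : Marking} (h : N.enabled t M) :
    N.fire t M (fun p => M p + (if p ∈ N.post t then 1 else 0) - (if p ∈ N.pre t then 1 else 0)) := by
  refine ⟨h, fun p => ?_⟩
  dsimp only
  by_cases hp : p ∈ N.pre t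
  · have h1 : 1 ≤ M p := h.2 p hp
    by_cases hq : p ∈ N.post t <;> simp only [hp, hq, if_true, if_false] <;> omega
  · by_cases hq : p ∈ N.post t <;> simp only [hp, hq, if_true, if_false] <;> omega

theorem fire_add {N : Net} {t : ℕ} {M M' : Marking} (D : Marking) (h : N.fire t M M') :
    N.fire t (fun q => M q + D q) (fun q => M' q + D q) := by
  refine ⟨⟨h.1.1, fun p hp => ?_⟩, fun p => ?_⟩
  · have := h.1.2 p hp; dsimp only; omega
  · have := h.2 p; dsimp only; omega

theorem firingSeq_append {N : Net} {σ₁ σ₂ : List ℕ} {M M₂ : Marking} :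
    N.firingSeq M (σ₁ ++ σ₂) M₂ ↔ ∃ M₁, N.firingSeq M σ₁ M₁ ∧ N.firingSeq M₁ σ₂ M₂ := by
  induction σ₁ generalizing M with
  | nil =>
    constructor
    · intro h; exact ⟨M, rfl, h⟩
    · rintro ⟨M₁, h1, h2⟩
      have he : M₁ = M := h1
      subst he; exact h2
  | cons t σ ih =>
    constructor
    · rintro ⟨Ma, hf, hrest⟩
      obtain ⟨M₁, h1, h2⟩ := ih.1 hrest
      exact ⟨M₁, ⟨Ma, hf, h1⟩, h2⟩
    · rintro ⟨M₁, ⟨Ma, hf, h1⟩, h2⟩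
      exact ⟨Ma, hf, ih.2 ⟨M₁, h1, h2⟩⟩

theorem firingSeq_snoc {N : Net} {σ : List ℕ} {t : ℕ} {M M' : Marking} :
    N.firingSeq M (σ ++ [t]) M' ↔ ∃ M₁, N.firingSeq M σ M₁ ∧ N.fire t M₁ M' := by
  rw [firingSeq_append]
  constructor
  · rintro ⟨M₁, h1, M₂, hf, h2⟩
    have he : M' = M₂ := h2
    subst he; exact ⟨M₁, h1, hf⟩
  · rintro ⟨M₁, h1, hf⟩
    exact ⟨M₁, h1, M', hf, rfl⟩

theorem firingSeq_add {N : Net} {σ : List ℕ} {M M' : Marking} (D : Marking)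
    (h : N.firingSeq M σ M') :
    N.firingSeq (fun q => M q + D q) σ (fun q => M' q + D q) := by
  induction σ generalizing M with
  | nil =>
    have he : M' = M := h
    subst he; rfl
  | cons t σ ih =>
    obtain ⟨M₁, hf, hrest⟩ := h
    exact ⟨_, fire_add D hf, ih hrest⟩

theorem reachable_trans' {N : Net} {M M₁ M₂ : Marking}
    (h1 : N.reachable M M₁) (h2 : N.reachable M₁ M₂) : N.reachable M M₂ := by
  obtain ⟨σ1, h1⟩ := h1; obtain ⟨σ2, h2⟩ := h2
  exact ⟨σ1 ++ σ2, firingSeq_append.2 ⟨M₁, h1, h2⟩⟩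

theorem reachable_fire {N : Net} {M M' : Marking} {t : ℕ} (h : N.fire t M M') :
    N.reachable M M' := ⟨[t], M', h, rfl⟩

theorem reachable_ind {N : Net} {M0 : Marking} {P : Marking → Prop} (h0 : P M0)
    (hs : ∀ M t M', N.reachable M0 M → P M → N.fire t M M' → P M') :
    ∀ M, N.reachable M0 M → P M := by
  have key : ∀ σ (M : Marking), N.firingSeq M0 σ M → P M := by
    intro σ
    induction σ using List.reverseRecOn with
    | nil =>
      intro M h
      have he : M = M0 := h
      subst he; exact h0
    | append_singleton σ t ih =>
      intro M h
      obtain ⟨M₁, h1, hf⟩ := firingSeq_snoc.1 h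
      exact hs M₁ t M ⟨σ, h1⟩ (ih M₁ h1) hf
  rintro M ⟨σ, h⟩
  exact key σ M h

/-- In a sound net, no reachable marking strictly dominates another reachable one. -/
theorem no_domination {N : Net} (hsound : N.Sound) {M₂ : Marking} (D : Marking)
    (h2 : N.reachable N.initM M₂) (h1 : N.reachable N.initM (fun q => M₂ q + D q)) :
    ∀ q, D q = 0 := by
  obtain ⟨σ, hσ⟩ := hsound.2.1 M₂ h2
  have hl := firingSeq_add D hσ
  have hreach : N.reachable N.initM (fun q => N.finalM q + D q) :=
    reachable_trans' h1 ⟨σ, hl⟩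
  have hsink : 1 ≤ (fun q => N.finalM q + D q) N.sink := by
    simp [Net.finalM]
  have hfin := hsound.2.2 _ hreach hsink
  intro q
  have hq : N.finalM q + D q = N.finalM q := congrFun hfin q
  omega

end Net

/-- Context for the choice-graph projection argument: a safe, sound WF-net with a
part `T` of its transitions having unique entry point `ps` and exit point `pe`. -/
structure CGCtx where
  N : Net
  T : Finset ℕ
  ps : ℕ
  pe : ℕ
  hWF : N.IsWF
  hsafe : N.Safe
  hsound : N.Sound
  hsub : T ⊆ N.transitions
  hentry : N.entry T = {ps}
  hexit : N.exit T = {pe}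

namespace CGCtx

variable (C : CGCtx)

/-- The raw choice-graph projection. -/
def R : Net := cgprojectRaw C.N C.T

theorem disj : Disjoint C.N.places C.N.transitions := C.hWF.1.1

theorem flow_ty : ∀ e ∈ C.N.flow,
    (e.1 ∈ C.N.places ∧ e.2 ∈ C.N.transitions) ∨
    (e.1 ∈ C.N.transitions ∧ e.2 ∈ C.N.places) := C.hWF.1.2

theorem pre_sub_places {t : ℕ} (ht : t ∈ C.N.transitions) : C.N.pre t ⊆ C.N.places := by
  intro x hx
  rcases C.flow_ty _ (Net.mem_pre_iff.1 hx) with ⟨h1, _⟩ | ⟨_, h2⟩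
  · exact h1
  · exact ((Finset.disjoint_left.1 C.disj h2) ht).elim

theorem post_sub_places {t : ℕ} (ht : t ∈ C.N.transitions) : C.N.post t ⊆ C.N.places := by
  intro x hx
  rcases C.flow_ty _ (Net.mem_post_iff.1 hx) with ⟨h1, _⟩ | ⟨_, h2⟩
  · exact ((Finset.disjoint_left.1 C.disj h1) ht).elim
  · exact h2

theorem pre_sub_trans {p : ℕ} (hp : p ∈ C.N.places) : C.N.pre p ⊆ C.N.transitions := by
  intro x hx
  rcases C.flow_ty _ (Net.mem_pre_iff.1 hx) with ⟨_, h2⟩ | ⟨h1, _⟩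
  · exact ((Finset.disjoint_left.1 C.disj hp) h2).elim
  · exact h1

theorem post_sub_trans {p : ℕ} (hp : p ∈ C.N.places) : C.N.post p ⊆ C.N.transitions := by
  intro x hx
  rcases C.flow_ty _ (Net.mem_post_iff.1 hx) with ⟨_, h2⟩ | ⟨h1, _⟩
  · exact h2
  · exact ((Finset.disjoint_left.1 C.disj hp) h1).elim

theorem trans_pre_nonempty {t : ℕ} (ht : t ∈ C.N.transitions) : (C.N.pre t).Nonempty := by
  have hpath := (C.hWF.2.2.2.2.2 t (Finset.mem_union_right _ ht)).1
  rcases hpath.cases_tail with h | ⟨c, _, hc⟩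
  · exfalso
    rw [h] at ht
    exact (Finset.disjoint_left.1 C.disj C.hWF.2.1) ht
  · exact ⟨c, Net.mem_pre_iff.2 hc⟩

theorem trans_post_nonempty {t : ℕ} (ht : t ∈ C.N.transitions) : (C.N.post t).Nonempty := by
  have hpath := (C.hWF.2.2.2.2.2 t (Finset.mem_union_right _ ht)).2
  rcases hpath.cases_head with h | ⟨c, hc, _⟩
  · exfalso
    rw [h] at ht
    exact (Finset.disjoint_left.1 C.disj C.hWF.2.2.1) ht
  · exact ⟨c, Net.mem_post_iff.2 hc⟩

theorem place_pre_nonempty {p : ℕ} (hp : p ∈ C.N.places) (hps : p ≠ C.N.source) :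
    (C.N.pre p).Nonempty := by
  rw [Finset.nonempty_iff_ne_empty]
  intro h
  exact hps ((C.hWF.2.2.2.1 p hp).1 h)

theorem place_post_nonempty {p : ℕ} (hp : p ∈ C.N.places) (hps : p ≠ C.N.sink) :
    (C.N.post p).Nonempty := by
  rw [Finset.nonempty_iff_ne_empty]
  intro h
  exact hps ((C.hWF.2.2.2.2.1 p hp).1 h)

theorem mem_entry_iff {q : ℕ} : q ∈ C.N.entry C.T ↔
    q ∈ C.N.places ∧ ((C.N.post q ∩ C.T).Nonempty ∧
      (q = C.N.source ∨ (C.N.pre q ∩ (C.N.transitions \ C.T)).Nonempty)) := by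
  unfold Net.entry
  rw [Finset.mem_filter]

theorem mem_exit_iff {q : ℕ} : q ∈ C.N.exit C.T ↔
    q ∈ C.N.places ∧ ((C.N.pre q ∩ C.T).Nonempty ∧
      (q = C.N.sink ∨ (C.N.post q ∩ (C.N.transitions \ C.T)).Nonempty)) := by
  unfold Net.exit
  rw [Finset.mem_filter]

theorem ps_spec : C.ps ∈ C.N.places ∧ ((C.N.post C.ps ∩ C.T).Nonempty ∧
    (C.ps = C.N.source ∨ (C.N.pre C.ps ∩ (C.N.transitions \ C.T)).Nonempty)) := by
  have : C.ps ∈ C.N.entry C.T := by rw [C.hentry]; exact Finset.mem_singleton_self _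
  exact (C.mem_entry_iff).1 this

theorem pe_spec : C.pe ∈ C.N.places ∧ ((C.N.pre C.pe ∩ C.T).Nonempty ∧
    (C.pe = C.N.sink ∨ (C.N.post C.pe ∩ (C.N.transitions \ C.T)).Nonempty)) := by
  have : C.pe ∈ C.N.exit C.T := by rw [C.hexit]; exact Finset.mem_singleton_self _
  exact (C.mem_exit_iff).1 this

theorem mem_adjP_iff {q : ℕ} : q ∈ C.N.adjP C.T ↔
    q ∈ C.N.places ∧ (((C.N.pre q ∪ C.N.post q) ∩ C.T).Nonempty) := by
  unfold Net.adjP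
  rw [Finset.mem_filter]

theorem adjP_places {q : ℕ} (hq : q ∈ C.N.adjP C.T) : q ∈ C.N.places :=
  ((C.mem_adjP_iff).1 hq).1

theorem preT_sub_adjP {t : ℕ} (ht : t ∈ C.T) : C.N.pre t ⊆ C.N.adjP C.T := by
  intro x hx
  refine (C.mem_adjP_iff).2 ⟨C.pre_sub_places (C.hsub ht) hx, ⟨t, ?_⟩⟩
  exact Finset.mem_inter.2
    ⟨Finset.mem_union_right _ (Net.mem_post_iff.2 (Net.mem_pre_iff.1 hx)), ht⟩

theorem postT_sub_adjP {t : ℕ} (ht : t ∈ C.T) : C.N.post t ⊆ C.N.adjP C.T := by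
  intro x hx
  refine (C.mem_adjP_iff).2 ⟨C.post_sub_places (C.hsub ht) hx, ⟨t, ?_⟩⟩
  exact Finset.mem_inter.2
    ⟨Finset.mem_union_left _ (Net.mem_pre_iff.2 (Net.mem_post_iff.1 hx)), ht⟩

theorem ps_mem_adjP : C.ps ∈ C.N.adjP C.T := by
  obtain ⟨hpl, ⟨t, ht⟩, _⟩ := C.ps_spec
  rw [Finset.mem_inter] at ht
  exact (C.mem_adjP_iff).2 ⟨hpl, ⟨t, Finset.mem_inter.2 ⟨Finset.mem_union_right _ ht.1, ht.2⟩⟩⟩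

theorem pe_mem_adjP : C.pe ∈ C.N.adjP C.T := by
  obtain ⟨hpl, ⟨t, ht⟩, _⟩ := C.pe_spec
  rw [Finset.mem_inter] at ht
  exact (C.mem_adjP_iff).2 ⟨hpl, ⟨t, Finset.mem_inter.2 ⟨Finset.mem_union_left _ ht.1, ht.2⟩⟩⟩

theorem pe_ne_source : C.pe ≠ C.N.source := by
  intro h
  obtain ⟨hpl, ⟨t, ht⟩, _⟩ := C.pe_spec
  have h0 : C.N.pre C.pe = ∅ := (C.hWF.2.2.2.1 _ hpl).2 h
  rw [Finset.mem_inter, h0] at ht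
  exact absurd ht.1 (Finset.notMem_empty t)

theorem ps_ne_sink : C.ps ≠ C.N.sink := by
  intro h
  obtain ⟨hpl, ⟨t, ht⟩, _⟩ := C.ps_spec
  have h0 : C.N.post C.ps = ∅ := (C.hWF.2.2.2.2.1 _ hpl).2 h
  rw [Finset.mem_inter, h0] at ht
  exact absurd ht.1 (Finset.notMem_empty t)

/-- A place of the part that is neither the entry nor the exit point. -/
def Internal (C : CGCtx) (q : ℕ) : Prop :=
  C.N.pre q ⊆ C.T ∧ C.N.post q ⊆ C.T ∧ (C.N.pre q).Nonempty ∧ (C.N.post q).Nonempty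

theorem classify {q : ℕ} (hq : q ∈ C.N.adjP C.T) : q = C.ps ∨ q = C.pe ∨ C.Internal q := by
  by_cases h1 : q = C.ps
  · exact Or.inl h1
  by_cases h2 : q = C.pe
  · exact Or.inr (Or.inl h2)
  refine Or.inr (Or.inr ?_)
  obtain ⟨hpl, hadj⟩ := (C.mem_adjP_iff).1 hq
  have hNE : q ∉ C.N.entry C.T := by rw [C.hentry]; simp [h1]
  have hNX : q ∉ C.N.exit C.T := by rw [C.hexit]; simp [h2]
  have hpostT : (C.N.post q ∩ C.T).Nonempty → (C.N.pre q ∩ C.T).Nonempty →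
      (C.N.pre q).Nonempty ∧ (C.N.post q).Nonempty := fun hp hr =>
    ⟨⟨hr.choose, (Finset.mem_inter.1 hr.choose_spec).1⟩,
     ⟨hp.choose, (Finset.mem_inter.1 hp.choose_spec).1⟩⟩
  -- q is not the source
  have hq_src : q ≠ C.N.source := by
    intro h
    have h0 : C.N.pre q = ∅ := (C.hWF.2.2.2.1 _ hpl).2 h
    have hpo : (C.N.post q ∩ C.T).Nonempty := by
      obtain ⟨v, hv⟩ := hadj
      rw [Finset.mem_inter, Finset.mem_union] at hv
      rcases hv.1 with hh | hh
      · rw [h0] at hh; exact absurd hh (Finset.notMem_empty v)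
      · exact ⟨v, Finset.mem_inter.2 ⟨hh, hv.2⟩⟩
    exact hNE ((C.mem_entry_iff).2 ⟨hpl, hpo, Or.inl h⟩)
  have hpre_ne : (C.N.pre q).Nonempty := C.place_pre_nonempty hpl hq_src
  -- pre q ⊆ T
  have pre_sub : C.N.pre q ⊆ C.T := by
    intro u hu
    by_contra huT
    have hut : u ∈ C.N.transitions := C.pre_sub_trans hpl hu
    have hout : (C.N.pre q ∩ (C.N.transitions \ C.T)).Nonempty :=
      ⟨u, Finset.mem_inter.2 ⟨hu, Finset.mem_sdiff.2 ⟨hut, huT⟩⟩⟩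
    by_cases hq1 : (C.N.post q ∩ C.T).Nonempty
    · exact hNE ((C.mem_entry_iff).2 ⟨hpl, hq1, Or.inr hout⟩)
    · have hpreT : (C.N.pre q ∩ C.T).Nonempty := by
        obtain ⟨v, hv⟩ := hadj
        rw [Finset.mem_inter, Finset.mem_union] at hv
        rcases hv.1 with hh | hh
        · exact ⟨v, Finset.mem_inter.2 ⟨hh, hv.2⟩⟩
        · exact absurd ⟨v, Finset.mem_inter.2 ⟨hh, hv.2⟩⟩ hq1
      by_cases hsink : q = C.N.sink
      · exact hNX ((C.mem_exit_iff).2 ⟨hpl, hpreT, Or.inl hsink⟩)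
      · obtain ⟨v, hv⟩ := C.place_post_nonempty hpl hsink
        have hvT : v ∉ C.T := fun hvt => hq1 ⟨v, Finset.mem_inter.2 ⟨hv, hvt⟩⟩
        have hvtr : v ∈ C.N.transitions := C.post_sub_trans hpl hv
        exact hNX ((C.mem_exit_iff).2 ⟨hpl, hpreT,
          Or.inr ⟨v, Finset.mem_inter.2 ⟨hv, Finset.mem_sdiff.2 ⟨hvtr, hvT⟩⟩⟩⟩)
  have hpreT : (C.N.pre q ∩ C.T).Nonempty :=
    ⟨hpre_ne.choose, Finset.mem_inter.2 ⟨hpre_ne.choose_spec, pre_sub hpre_ne.choose_spec⟩⟩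
  -- q is not the sink
  have hq_sink : q ≠ C.N.sink := by
    intro h
    exact hNX ((C.mem_exit_iff).2 ⟨hpl, hpreT, Or.inl h⟩)
  have hpost_ne : (C.N.post q).Nonempty := C.place_post_nonempty hpl hq_sink
  -- post q ⊆ T
  have post_sub : C.N.post q ⊆ C.T := by
    intro v hv
    by_contra hvT
    have hvt : v ∈ C.N.transitions := C.post_sub_trans hpl hv
    exact hNX ((C.mem_exit_iff).2 ⟨hpl, hpreT,
      Or.inr ⟨v, Finset.mem_inter.2 ⟨hv, Finset.mem_sdiff.2 ⟨hvt, hvT⟩⟩⟩⟩)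
  exact ⟨pre_sub, post_sub, hpre_ne, hpost_ne⟩

/-- Tokens can only enter the part (from outside transitions) at `ps` (or at an
exit point `pe` that the part never consumes). -/
theorem out_post {u q : ℕ} (hu : u ∈ C.N.transitions) (huT : u ∉ C.T)
    (hq : q ∈ C.N.adjP C.T) (hqu : q ∈ C.N.post u) :
    q = C.ps ∨ (q = C.pe ∧ ¬(C.N.post C.pe ∩ C.T).Nonempty) := by
  rcases C.classify hq with h | h | h
  · exact Or.inl h
  · by_cases hf : (C.N.post C.pe ∩ C.T).Nonempty
    · left
      have hm : C.pe ∈ C.N.entry C.T := (C.mem_entry_iff).2 ⟨C.pe_spec.1, hf,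
        Or.inr ⟨u, Finset.mem_inter.2 ⟨Net.mem_pre_iff.2 (Net.mem_post_iff.1 (h ▸ hqu)),
          Finset.mem_sdiff.2 ⟨hu, huT⟩⟩⟩⟩
      rw [C.hentry] at hm
      exact h.trans (Finset.mem_singleton.1 hm)
    · exact Or.inr ⟨h, hf⟩
  · exact absurd (h.1 (Net.mem_pre_iff.2 (Net.mem_post_iff.1 hqu))) huT

/-- Tokens can only leave the part (to outside transitions) at `pe` (or at an
entry point `ps` that the part never feeds). -/
theorem out_pre {u q : ℕ} (hu : u ∈ C.N.transitions) (huT : u ∉ C.T)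
    (hq : q ∈ C.N.adjP C.T) (hqu : q ∈ C.N.pre u) :
    q = C.pe ∨ (q = C.ps ∧ C.N.pre C.ps ∩ C.T = ∅) := by
  rcases C.classify hq with h | h | h
  · by_cases hf : (C.N.pre C.ps ∩ C.T).Nonempty
    · left
      have hm : C.ps ∈ C.N.exit C.T := (C.mem_exit_iff).2 ⟨C.ps_spec.1, hf,
        Or.inr ⟨u, Finset.mem_inter.2 ⟨Net.mem_post_iff.2 (Net.mem_pre_iff.1 (h ▸ hqu)),
          Finset.mem_sdiff.2 ⟨hu, huT⟩⟩⟩⟩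
      rw [C.hexit] at hm
      exact h.trans (Finset.mem_singleton.1 hm)
    · exact Or.inr ⟨h, Finset.not_nonempty_iff_eq_empty.1 hf⟩
  · exact Or.inl h
  · exact absurd (h.2.1 (Net.mem_post_iff.2 (Net.mem_pre_iff.1 hqu))) huT

theorem R_places : C.R.places = C.N.adjP C.T := rfl

theorem R_trans : C.R.transitions = C.T := rfl

theorem R_source : C.R.source = C.ps := by
  show (C.N.entry C.T).sup id = C.ps
  rw [C.hentry]
  simp

theorem R_sink : C.R.sink = C.pe := by
  show (C.N.exit C.T).sup id = C.pe
  rw [C.hexit]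
  simp

theorem R_flow_mem {e : ℕ × ℕ} : e ∈ C.R.flow ↔ e ∈ C.N.flow ∧
    ((e.1 ∈ C.N.adjP C.T ∧ e.2 ∈ C.T) ∨ (e.1 ∈ C.T ∧ e.2 ∈ C.N.adjP C.T)) := by
  show e ∈ C.N.flow.filter _ ↔ _
  rw [Finset.mem_filter]

theorem R_pre_trans {t : ℕ} (ht : t ∈ C.T) : C.R.pre t = C.N.pre t := by
  ext x
  rw [Net.mem_pre_iff, Net.mem_pre_iff, C.R_flow_mem]
  constructor
  · rintro ⟨h, _⟩; exact h
  · intro h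
    exact ⟨h, Or.inl ⟨C.preT_sub_adjP ht (Net.mem_pre_iff.2 h), ht⟩⟩

theorem R_post_trans {t : ℕ} (ht : t ∈ C.T) : C.R.post t = C.N.post t := by
  ext x
  rw [Net.mem_post_iff, Net.mem_post_iff, C.R_flow_mem]
  constructor
  · rintro ⟨h, _⟩; exact h
  · intro h
    exact ⟨h, Or.inr ⟨ht, C.postT_sub_adjP ht (Net.mem_post_iff.2 h)⟩⟩

theorem R_pre_place {q : ℕ} (hq : q ∈ C.N.adjP C.T) : C.R.pre q = C.N.pre q ∩ C.T := by
  ext x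
  rw [Net.mem_pre_iff, Finset.mem_inter, Net.mem_pre_iff, C.R_flow_mem]
  constructor
  · rintro ⟨h, hc⟩
    refine ⟨h, ?_⟩
    rcases hc with ⟨_, h2⟩ | ⟨h1, _⟩
    · exact absurd (C.hsub h2) (Finset.disjoint_left.1 C.disj (C.adjP_places hq))
    · exact h1
  · rintro ⟨h, hx⟩
    exact ⟨h, Or.inr ⟨hx, hq⟩⟩

theorem R_post_place {q : ℕ} (hq : q ∈ C.N.adjP C.T) : C.R.post q = C.N.post q ∩ C.T := by
  ext x
  rw [Net.mem_post_iff, Finset.mem_inter, Net.mem_post_iff, C.R_flow_mem]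
  constructor
  · rintro ⟨h, hc⟩
    refine ⟨h, ?_⟩
    rcases hc with ⟨h1, h2⟩ | ⟨h1, _⟩
    · exact h2
    · exact absurd (C.hsub h1) (Finset.disjoint_left.1 C.disj (C.adjP_places hq))
  · rintro ⟨h, hx⟩
    exact ⟨h, Or.inl ⟨hq, hx⟩⟩

end CGCtx

namespace CGCtx

variable (C : CGCtx)

/-- Reachable markings of the raw projection from its initial marking. -/
def Reach (m : Marking) : Prop := C.R.reachable C.R.initM m

theorem R_initM : C.R.initM = fun q => if q = C.ps then 1 else 0 := by
  funext q
  unfold Net.initM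
  rw [C.R_source]

theorem R_finalM : C.R.finalM = fun q => if q = C.pe then 1 else 0 := by
  funext q
  unfold Net.finalM
  rw [C.R_sink]

theorem Reach_nonzero {m : Marking} (h : C.Reach m) : ∃ q, 1 ≤ m q := by
  refine Net.reachable_ind (P := fun m => ∃ q, 1 ≤ m q) ⟨C.ps, ?_⟩ ?_ m h
  · rw [C.R_initM]; simp
  · intro m t m' _ _ hf
    have ht : t ∈ C.T := hf.1.1
    obtain ⟨q, hq⟩ := C.trans_post_nonempty (C.hsub ht)
    have hq' : q ∈ C.R.post t := by rw [C.R_post_trans ht]; exact hq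
    have hb := hf.2 q
    rw [if_pos hq'] at hb
    refine ⟨q, ?_⟩
    by_cases hp : q ∈ C.R.pre t
    · have := hf.1.2 q hp
      rw [if_pos hp] at hb
      omega
    · rw [if_neg hp] at hb
      omega

theorem Reach_zero_off {m : Marking} (h : C.Reach m) : ∀ q, q ∉ C.N.adjP C.T → m q = 0 := by
  refine Net.reachable_ind (P := fun m => ∀ q, q ∉ C.N.adjP C.T → m q = 0) ?_ ?_ m h
  · intro q hq
    have hne : q ≠ C.ps := fun he => hq (he ▸ C.ps_mem_adjP)
    rw [C.R_initM]
    simp [hne]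
  · intro m t m' _ ih hf q hq
    have ht : t ∈ C.T := hf.1.1
    have h1 : q ∉ C.R.pre t := fun hc => hq (C.preT_sub_adjP ht (by rwa [C.R_pre_trans ht] at hc))
    have h2 : q ∉ C.R.post t := fun hc => hq (C.postT_sub_adjP ht (by rwa [C.R_post_trans ht] at hc))
    rw [Net.fire_untouched hf h1 h2]
    exact ih q hq

/-- Lift a run of the projection to the full net, on any pointwise-larger marking. -/
theorem liftRN {σ : List ℕ} {m m' : Marking} (h : C.R.firingSeq m σ m') :
    ∀ M : Marking, (∀ q, m q ≤ M q) →
      ∃ M', C.N.firingSeq M σ M' ∧ ∀ q, M' q + m q = M q + m' q := by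
  induction σ generalizing m with
  | nil =>
    intro M _
    have he : m' = m := h
    subst he
    exact ⟨M, rfl, fun q => rfl⟩
  | cons t σ ih =>
    intro M hle
    obtain ⟨m₁, hf, hrest⟩ := h
    have ht : t ∈ C.T := hf.1.1
    have hen : C.N.enabled t M := by
      refine ⟨C.hsub ht, fun p hp => ?_⟩
      have hp' : p ∈ C.R.pre t := by rw [C.R_pre_trans ht]; exact hp
      exact le_trans (hf.1.2 p hp') (hle p)
    have hmp : ∀ p, p ∈ C.N.pre t → 1 ≤ m p := fun p hp =>
      hf.1.2 p (by rw [C.R_pre_trans ht]; exact hp)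
    set M₁ : Marking := fun q => M q - m q + m₁ q with hM₁
    have hfN : C.N.fire t M M₁ := by
      refine ⟨hen, fun p => ?_⟩
      have hb := hf.2 p
      rw [C.R_pre_trans ht, C.R_post_trans ht] at hb
      have hgoal : M₁ p = M p - m p + m₁ p := rfl
      have hlep := hle p
      rw [hgoal]
      by_cases h1 : p ∈ C.N.pre t <;> by_cases h2 : p ∈ C.N.post t
      · have := hmp p h1
        simp only [h1, h2, if_true] at hb ⊢
        omega
      · have := hmp p h1
        simp only [h1, h2, if_true, if_false] at hb ⊢
        omega
      · simp only [h1, h2, if_true, if_false] at hb ⊢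
        omega
      · simp only [h1, h2, if_false] at hb ⊢
        omega
    have hle₁ : ∀ q, m₁ q ≤ M₁ q := by
      intro q
      have h3 := hle q
      have hg : M₁ q = M q - m q + m₁ q := rfl
      rw [hg]
      omega
    obtain ⟨M', hseq, heq⟩ := ih hrest M₁ hle₁
    refine ⟨M', ⟨M₁, hfN, hseq⟩, fun q => ?_⟩
    have h1 := heq q
    have h2 : M₁ q = M q - m q + m₁ q := rfl
    have h3 := hle q
    omega

theorem R_enabled_of {t : ℕ} (ht : t ∈ C.T) {m : Marking}
    (hm : ∀ p ∈ C.N.pre t, 1 ≤ m p) : C.R.enabled t m := by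
  refine ⟨ht, fun p hp => ?_⟩
  rw [C.R_pre_trans ht] at hp
  exact hm p hp

/-- Result of firing `t` (computed with the pre/post sets of `N`). -/
def fireOut (t : ℕ) (m : Marking) : Marking :=
  fun p => m p + (if p ∈ C.N.post t then 1 else 0) - (if p ∈ C.N.pre t then 1 else 0)

theorem R_fire_out {t : ℕ} (ht : t ∈ C.T) {m : Marking} (hm : ∀ p ∈ C.N.pre t, 1 ≤ m p) :
    C.R.fire t m (C.fireOut t m) := by
  refine ⟨C.R_enabled_of ht hm, fun p => ?_⟩
  rw [C.R_pre_trans ht, C.R_post_trans ht]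
  unfold fireOut
  by_cases h1 : p ∈ C.N.pre t <;> by_cases h2 : p ∈ C.N.post t
  · have := hm p h1
    simp only [h1, h2, if_true]
    omega
  · have := hm p h1
    simp only [h1, h2, if_true, if_false]
    omega
  · simp only [h1, h2, if_true, if_false]
    omega
  · simp only [h1, h2, if_false]
    omega

theorem fireOut_balance (t : ℕ) (m : Marking) (hm : ∀ p ∈ C.N.pre t, 1 ≤ m p) (p : ℕ) :
    C.fireOut t m p + (if p ∈ C.N.pre t then 1 else 0) = m p + (if p ∈ C.N.post t then 1 else 0) := by
  unfold fireOut
  by_cases h1 : p ∈ C.N.pre t <;> by_cases h2 : p ∈ C.N.post t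
  · have := hm p h1
    simp only [h1, h2, if_true]
    omega
  · have := hm p h1
    simp only [h1, h2, if_true, if_false]
    omega
  · simp only [h1, h2, if_true, if_false]
    omega
  · simp only [h1, h2, if_false]
    omega

/-- If the part does not feed its own entry point, every projection run with a
token left on `ps` is the empty run. -/
theorem persist_run (hnf : C.N.pre C.ps ∩ C.T = ∅) :
    ∀ (σ : List ℕ) (m : Marking), C.R.firingSeq C.R.initM σ m → 1 ≤ m C.ps → σ = [] := by
  have hnotpost : ∀ t ∈ C.T, C.ps ∉ C.N.post t := by
    intro t ht hc
    have : t ∈ C.N.pre C.ps ∩ C.T :=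
      Finset.mem_inter.2 ⟨Net.mem_pre_iff.2 (Net.mem_post_iff.1 hc), ht⟩
    rw [hnf] at this
    exact Finset.notMem_empty t this
  have inv : ∀ (σ : List ℕ) (m : Marking), C.R.firingSeq C.R.initM σ m →
      σ = [] ∨ m C.ps = 0 := by
    intro σ
    induction σ using List.reverseRecOn with
    | nil => intro m _; exact Or.inl rfl
    | append_singleton σ t ih =>
      intro m h
      obtain ⟨M₁, h1, hf⟩ := Net.firingSeq_snoc.1 h
      have ht : t ∈ C.T := hf.1.1
      have hps_npost : C.ps ∉ C.R.post t := by
        rw [C.R_post_trans ht]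
        exact hnotpost t ht
      refine Or.inr ?_
      rcases ih M₁ h1 with hnil | hzero
      · have he : M₁ = C.R.initM := by rw [hnil] at h1; exact h1
        subst he
        obtain ⟨p, hp⟩ := C.trans_pre_nonempty (C.hsub ht)
        have hpR : p ∈ C.R.pre t := by rw [C.R_pre_trans ht]; exact hp
        have hen := hf.1.2 p hpR
        have hpps : p = C.ps := by
          by_contra hne
          rw [C.R_initM] at hen
          simp [hne] at hen
        rw [hpps] at hpR
        have hb := hf.2 C.ps
        rw [if_pos hpR, if_neg hps_npost, C.R_initM] at hb
        simp at hb
        omega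
      · have hps_npre : C.ps ∉ C.R.pre t := by
          intro hc
          have := hf.1.2 _ hc
          omega
        rw [Net.fire_untouched hf hps_npre hps_npost]
        exact hzero
  intro σ m h hps
  rcases inv σ m h with h0 | h0
  · exact h0
  · omega

theorem persist_mark (hnf : C.N.pre C.ps ∩ C.T = ∅) {m : Marking} (h : C.Reach m)
    (hps : 1 ≤ m C.ps) : m = C.R.initM := by
  obtain ⟨σ, hσ⟩ := h
  have h0 := C.persist_run hnf σ m hσ hps
  rw [h0] at hσ
  exact hσ

/-- Agreement of an `N`-marking with a projection marking away from the exit point. -/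
def Agree (M m : Marking) : Prop := ∀ q ∈ C.N.adjP C.T, q ≠ C.pe → M q = m q

/-- Slack condition at the exit point. -/
def Slack (M m : Marking) : Prop := (C.N.post C.pe ∩ C.T).Nonempty → M C.pe ≤ m C.pe

/-- The part-projection invariant. -/
def Jw (M : Marking) : Prop :=
  ∃ m, (C.Reach m ∨ m = fun _ => 0) ∧ C.Agree M m ∧ C.Slack M m

theorem J_enables {M m : Marking} {t : ℕ} (ht : t ∈ C.T) (hA : C.Agree M m)
    (hS : C.Slack M m) (hen : C.N.enabled t M) : ∀ p ∈ C.N.pre t, 1 ≤ m p := by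
  intro p hp
  have hM := hen.2 p hp
  have hadj := C.preT_sub_adjP ht hp
  by_cases hpe : p = C.pe
  · subst hpe
    have hnf : (C.N.post C.pe ∩ C.T).Nonempty :=
      ⟨t, Finset.mem_inter.2 ⟨Net.mem_post_iff.2 (Net.mem_pre_iff.1 hp), ht⟩⟩
    exact le_trans hM (hS hnf)
  · rw [← hA p hadj hpe]
    exact hM

theorem out_internal_untouched {u q : ℕ} (hu : u ∈ C.N.transitions) (huT : u ∉ C.T)
    (hq : q ∈ C.N.adjP C.T) (h1 : q ≠ C.ps) (h2 : q ≠ C.pe) :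
    q ∉ C.N.pre u ∧ q ∉ C.N.post u := by
  constructor
  · intro hc
    rcases C.out_pre hu huT hq (Net.mem_pre_iff.2 (Net.mem_pre_iff.1 hc)) with h | h
    · exact h2 h
    · exact h1 h.1
  · intro hc
    rcases C.out_post hu huT hq hc with h | h
    · exact h1 h
    · exact h2 h.1

end CGCtx

namespace CGCtx

variable (C : CGCtx)

theorem R_initM_apply (q : ℕ) : C.R.initM q = if q = C.ps then 1 else 0 := by
  unfold Net.initM
  rw [C.R_source]

theorem R_finalM_apply (q : ℕ) : C.R.finalM q = if q = C.pe then 1 else 0 := by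
  unfold Net.finalM
  rw [C.R_sink]

theorem nfed_of_eq (h : C.ps = C.pe) : (C.N.post C.pe ∩ C.T).Nonempty :=
  h ▸ C.ps_spec.2.1

theorem Reach_init : C.Reach C.R.initM := ⟨[], rfl⟩

/-- Balance transfer for equalities. -/
theorem step_eq {M M' m m' : Marking} {A B : Finset ℕ}
    (hbN : ∀ p, M' p + (if p ∈ A then 1 else 0) = M p + (if p ∈ B then 1 else 0))
    (hbR : ∀ p, m' p + (if p ∈ A then 1 else 0) = m p + (if p ∈ B then 1 else 0))
    (q : ℕ) (h : M q = m q) : M' q = m' q := by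
  have h1 := hbN q
  have h2 := hbR q
  by_cases hp : q ∈ A <;> by_cases hq : q ∈ B <;>
    simp only [hp, hq, if_true, if_false] at h1 h2 <;> omega

theorem step_le {M M' m m' : Marking} {A B : Finset ℕ}
    (hbN : ∀ p, M' p + (if p ∈ A then 1 else 0) = M p + (if p ∈ B then 1 else 0))
    (hbR : ∀ p, m' p + (if p ∈ A then 1 else 0) = m p + (if p ∈ B then 1 else 0))
    (q : ℕ) (h : M q ≤ m q) : M' q ≤ m' q := by
  have h1 := hbN q
  have h2 := hbR q
  by_cases hp : q ∈ A <;> by_cases hq : q ∈ B <;>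
    simp only [hp, hq, if_true, if_false] at h1 h2 <;> omega

/-- Refeed analysis: whenever an outside transition puts a token on the entry
point, the part must be quiescent, and afterwards the invariant witness is the
initial projection marking. -/
theorem refeed {M M' : Marking} (hM : C.N.reachable C.N.initM M) {u : ℕ} (huT : u ∉ C.T)
    (hf : C.N.fire u M M') (hfeed : C.ps ∈ C.N.post u)
    {m : Marking} (hRm : C.Reach m ∨ m = fun _ => 0)
    (hA : C.Agree M m) (hS : C.Slack M m) :
    (C.Agree M' C.R.initM ∧ C.Slack M' C.R.initM) ∧
      ((∀ q ∈ C.N.adjP C.T, q ≠ C.pe → m q = 0) ∨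
        (m = C.R.initM ∧ C.N.pre C.ps ∩ C.T = ∅ ∧ C.ps ≠ C.pe)) := by
  have hu : u ∈ C.N.transitions := hf.1.1
  have hM'reach : C.N.reachable C.N.initM M' := Net.reachable_trans' hM (Net.reachable_fire hf)
  have hM'ps : 1 ≤ M' C.ps := by
    have hb := hf.2 C.ps
    rw [if_pos hfeed] at hb
    by_cases hpre : C.ps ∈ C.N.pre u
    · have := hf.1.2 _ hpre
      rw [if_pos hpre] at hb
      omega
    · rw [if_neg hpre] at hb
      omega
  have huntouched : ∀ q ∈ C.N.adjP C.T, q ≠ C.ps → q ≠ C.pe → M' q = M q := by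
    intro q hq h1 h2
    obtain ⟨hp1, hp2⟩ := C.out_internal_untouched hu huT hq h1 h2
    exact Net.fire_untouched hf hp1 hp2
  have hpe_npost : (C.N.post C.pe ∩ C.T).Nonempty → C.ps ≠ C.pe → C.pe ∉ C.N.post u := by
    intro hnfed hne hc
    rcases C.out_post hu huT C.pe_mem_adjP hc with h | h
    · exact hne h.symm
    · exact h.2 hnfed
  rcases hRm with hm | hm0
  · -- replay the run to m on top of the new token
    obtain ⟨σm, hσm⟩ := hm
    have hle : ∀ q, C.R.initM q ≤ M' q := by
      intro q
      rw [C.R_initM_apply]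
      by_cases hq : q = C.ps
      · rw [if_pos hq, hq]
        exact hM'ps
      · rw [if_neg hq]
        omega
    obtain ⟨M'', hseq, heq⟩ := C.liftRN hσm M' hle
    have hM'' : C.N.reachable C.N.initM M'' := Net.reachable_trans' hM'reach ⟨σm, hseq⟩
    have hsafe'' := C.hsafe M'' hM''
    have hzero : ∀ q ∈ C.N.adjP C.T, q ≠ C.ps → q ≠ C.pe → m q = 0 := by
      intro q hq h1 h2
      have h3 := heq q
      have h4 : C.R.initM q = 0 := by rw [C.R_initM_apply, if_neg h1]
      have h5 := huntouched q hq h1 h2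
      have h6 := hA q hq h2
      have h7 := hsafe'' q
      omega
    by_cases hpspe : C.ps = C.pe
    · refine ⟨⟨?_, ?_⟩, Or.inl ?_⟩
      · intro q hq h2
        have h1 : q ≠ C.ps := fun hc => h2 (hc.trans hpspe)
        have := hzero q hq h1 h2
        rw [huntouched q hq h1 h2, hA q hq h2, this, C.R_initM_apply, if_neg h1]
      · intro _
        rw [C.R_initM_apply, if_pos hpspe.symm]
        exact C.hsafe M' hM'reach C.pe
      · intro q hq h2
        exact hzero q hq (fun hc => h2 (hc.trans hpspe)) h2
    · by_cases hpre : C.ps ∈ C.N.pre u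
      · have hnof : C.N.pre C.ps ∩ C.T = ∅ := by
          rcases C.out_pre hu huT C.ps_mem_adjP hpre with h | h
          · exact absurd h hpspe
          · exact h.2
        have hminit : m = C.R.initM := by
          refine C.persist_mark hnof ⟨σm, hσm⟩ ?_
          have h6 := hA C.ps C.ps_mem_adjP hpspe
          have h7 := hf.1.2 _ hpre
          omega
        have hMps : M' C.ps = M C.ps := by
          have hb := hf.2 C.ps
          rw [if_pos hfeed, if_pos hpre] at hb
          omega
        refine ⟨⟨?_, ?_⟩, Or.inr ⟨hminit, hnof, hpspe⟩⟩
        · intro q hq h2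
          by_cases h1 : q = C.ps
          · rw [h1, hMps, hA C.ps C.ps_mem_adjP hpspe, hminit]
          · rw [huntouched q hq h1 h2, hA q hq h2, hminit]
        · intro hnfed
          have h8 := hS hnfed
          have h9 : m C.pe = 0 := by
            rw [hminit, C.R_initM_apply, if_neg (fun hc => hpspe hc.symm)]
          have h10 : C.pe ∉ C.N.post u := hpe_npost hnfed hpspe
          have hb := hf.2 C.pe
          rw [if_neg h10] at hb
          rw [C.R_initM_apply, if_neg (fun hc => hpspe hc.symm)]
          by_cases he : C.pe ∈ C.N.pre u <;> simp only [he, if_true, if_false] at hb <;> omega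
      · have hMps : M' C.ps = M C.ps + 1 := by
          have hb := hf.2 C.ps
          rw [if_pos hfeed, if_neg hpre] at hb
          omega
        have hmps : m C.ps = 0 := by
          have h3 := heq C.ps
          have h4 : C.R.initM C.ps = 1 := by rw [C.R_initM_apply, if_pos rfl]
          have h6 := hA C.ps C.ps_mem_adjP hpspe
          have h7 := hsafe'' C.ps
          omega
        refine ⟨⟨?_, ?_⟩, Or.inl ?_⟩
        · intro q hq h2
          by_cases h1 : q = C.ps
          · rw [h1, hMps, hA C.ps C.ps_mem_adjP hpspe, hmps, C.R_initM_apply, if_pos rfl]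
          · rw [huntouched q hq h1 h2, hA q hq h2, hzero q hq h1 h2,
              C.R_initM_apply, if_neg h1]
        · intro hnfed
          have h8 := hS hnfed
          have h10 : C.pe ∉ C.N.post u := hpe_npost hnfed hpspe
          have hb := hf.2 C.pe
          rw [if_neg h10] at hb
          have h3 := heq C.pe
          have h4 : C.R.initM C.pe = 0 := by
            rw [C.R_initM_apply, if_neg (fun hc => hpspe hc.symm)]
          have h7 := hsafe'' C.pe
          rw [h4]
          by_cases he : C.pe ∈ C.N.pre u
          · have h11 := hf.1.2 _ he
            rw [if_pos he] at hb
            omega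
          · rw [if_neg he] at hb
            omega
        · intro q hq h2
          by_cases h1 : q = C.ps
          · rw [h1]; exact hmps
          · exact hzero q hq h1 h2
  · -- the part was quiescent
    have hmq : ∀ q, m q = 0 := fun q => by rw [hm0]
    have hMps0 : M C.ps = 0 := by
      by_cases hpspe : C.ps = C.pe
      · have h8 := hS (C.nfed_of_eq hpspe)
        have h9 := hmq C.pe
        rw [hpspe]
        omega
      · rw [hA C.ps C.ps_mem_adjP hpspe, hmq]
    have hpre : C.ps ∉ C.N.pre u := by
      intro hc
      have := hf.1.2 _ hc
      omega
    have hMps : M' C.ps = M C.ps + 1 := by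
      have hb := hf.2 C.ps
      rw [if_pos hfeed, if_neg hpre] at hb
      omega
    refine ⟨⟨?_, ?_⟩, Or.inl fun q _ _ => hmq q⟩
    · intro q hq h2
      by_cases h1 : q = C.ps
      · rw [h1, hMps, hMps0, C.R_initM_apply, if_pos rfl]
      · rw [huntouched q hq h1 h2, hA q hq h2, hmq, C.R_initM_apply, if_neg h1]
    · intro hnfed
      by_cases hpspe : C.ps = C.pe
      · rw [C.R_initM_apply, if_pos hpspe.symm]
        exact C.hsafe M' hM'reach C.pe
      · have h8 := hS hnfed
        have h9 := hmq C.pe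
        have h10 : C.pe ∉ C.N.post u := hpe_npost hnfed hpspe
        have hb := hf.2 C.pe
        rw [if_neg h10] at hb
        rw [C.R_initM_apply, if_neg (fun hc => hpspe hc.symm)]
        by_cases he : C.pe ∈ C.N.pre u <;> simp only [he, if_true, if_false] at hb <;> omega

/-- The invariant holds for every reachable marking of `N`. -/
theorem Jinv : ∀ M, C.N.reachable C.N.initM M → C.Jw M := by
  refine Net.reachable_ind (P := C.Jw) ?_ ?_
  · -- initial marking
    by_cases hsrc : C.N.source = C.ps
    · refine ⟨C.R.initM, Or.inl C.Reach_init, ?_, ?_⟩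
      · intro q _ _
        rw [C.R_initM_apply]
        unfold Net.initM
        rw [hsrc]
      · intro _
        unfold Net.initM
        rw [if_neg C.pe_ne_source]
        omega
    · refine ⟨fun _ => 0, Or.inr rfl, ?_, ?_⟩
      · intro q hq _
        unfold Net.initM
        rw [if_neg]
        intro hc
        rcases C.classify hq with h | h | h
        · exact hsrc (hc ▸ h)
        · exact C.pe_ne_source (h ▸ hc)
        · obtain ⟨p, hp⟩ := h.2.2.1
          have h0 : C.N.pre q = ∅ := (C.hWF.2.2.2.1 q (C.adjP_places hq)).2 hc
          rw [h0] at hp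
          exact Finset.notMem_empty p hp
      · intro _
        unfold Net.initM
        rw [if_neg C.pe_ne_source]
  · rintro M t M' hMreach ⟨m, hRm, hA, hS⟩ hf
    by_cases htT : t ∈ C.T
    · -- a part transition fires: mirror it in the projection
      have hm : ∀ p ∈ C.N.pre t, 1 ≤ m p := C.J_enables htT hA hS hf.1
      have hmr : C.Reach m := by
        rcases hRm with h | h
        · exact h
        · exfalso
          obtain ⟨p, hp⟩ := C.trans_pre_nonempty (C.hsub htT)
          have h9 : m p = 0 := by rw [h]
          have := hm p hp
          omega
      have hfr := C.R_fire_out htT hm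
      have hbR := C.fireOut_balance t m hm
      refine ⟨C.fireOut t m, Or.inl (Net.reachable_trans' hmr (Net.reachable_fire hfr)), ?_, ?_⟩
      · intro q hq h2
        exact step_eq hf.2 hbR q (hA q hq h2)
      · intro hnfed
        exact step_le hf.2 hbR C.pe (hS hnfed)
    · by_cases hfeed : C.ps ∈ C.N.post t
      · obtain ⟨⟨hA', hS'⟩, _⟩ := C.refeed hMreach htT hf hfeed hRm hA hS
        exact ⟨C.R.initM, Or.inl C.Reach_init, hA', hS'⟩
      · have hu : t ∈ C.N.transitions := hf.1.1
        have hpe_npost : (C.N.post C.pe ∩ C.T).Nonempty → C.pe ∉ C.N.post t := by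
          intro hnfed hc
          rcases C.out_post hu htT C.pe_mem_adjP hc with h | h
          · exact hfeed (h ▸ hc)
          · exact h.2 hnfed
        by_cases hcons : C.ps ∈ C.N.pre t ∧ C.ps ≠ C.pe
        · -- the entry token is taken by another part
          obtain ⟨hpre, hpspe⟩ := hcons
          have hnof : C.N.pre C.ps ∩ C.T = ∅ := by
            rcases C.out_pre hu htT C.ps_mem_adjP hpre with h | h
            · exact absurd h hpspe
            · exact h.2
          have hmr : C.Reach m := by
            rcases hRm with h | h
            · exact h
            · exfalso
              have h9 : m C.ps = 0 := by rw [h]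
              have h6 := hA C.ps C.ps_mem_adjP hpspe
              have h7 := hf.1.2 _ hpre
              omega
          have hminit : m = C.R.initM := by
            refine C.persist_mark hnof hmr ?_
            have h6 := hA C.ps C.ps_mem_adjP hpspe
            have h7 := hf.1.2 _ hpre
            omega
          refine ⟨fun _ => 0, Or.inr rfl, ?_, ?_⟩
          · intro q hq h2
            by_cases h1 : q = C.ps
            · have hb := hf.2 C.ps
              rw [if_pos hpre, if_neg hfeed] at hb
              have h6 := hA C.ps C.ps_mem_adjP hpspe
              have h9 : m C.ps = 1 := by rw [hminit, C.R_initM_apply, if_pos rfl]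
              rw [h1]
              show M' C.ps = 0
              omega
            · obtain ⟨hp1, hp2⟩ := C.out_internal_untouched hu htT hq h1 h2
              rw [Net.fire_untouched hf hp1 hp2, hA q hq h2, hminit, C.R_initM_apply, if_neg h1]
          · intro hnfed
            show M' C.pe ≤ 0
            have h8 := hS hnfed
            have h9 : m C.pe = 0 := by
              rw [hminit, C.R_initM_apply, if_neg (fun hc => hpspe hc.symm)]
            have hb := hf.2 C.pe
            rw [if_neg (hpe_npost hnfed)] at hb
            by_cases he : C.pe ∈ C.N.pre t <;> simp only [he, if_true, if_false] at hb <;> omega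
        · -- the move does not affect the part at all (except consuming `pe`)
          refine ⟨m, hRm, ?_, ?_⟩
          · intro q hq h2
            by_cases h1 : q = C.ps
            · have hps_pre : C.ps ∉ C.N.pre t := by
                intro hc
                exact hcons ⟨hc, fun he => h2 (h1.trans he)⟩
              have hb := hf.2 C.ps
              rw [if_neg hps_pre, if_neg hfeed] at hb
              rw [← hA q hq h2, h1]
              omega
            · obtain ⟨hp1, hp2⟩ := C.out_internal_untouched hu htT hq h1 h2
              rw [Net.fire_untouched hf hp1 hp2]
              exact hA q hq h2
          · intro hnfed
            have h8 := hS hnfed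
            have hb := hf.2 C.pe
            rw [if_neg (hpe_npost hnfed)] at hb
            by_cases he : C.pe ∈ C.N.pre t <;> simp only [he, if_true, if_false] at hb <;> omega

end CGCtx

namespace CGCtx

variable (C : CGCtx)

/-- A clean activation of the part exists in `N`. -/
theorem realization : ∃ M₀, C.N.reachable C.N.initM M₀ ∧
    C.Agree M₀ C.R.initM ∧ C.Slack M₀ C.R.initM ∧ 1 ≤ M₀ C.ps := by
  rcases C.ps_spec.2.2 with hsrc | ⟨u, hu⟩
  · refine ⟨C.N.initM, ⟨[], rfl⟩, ?_, ?_, ?_⟩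
    · intro q hq h2
      rw [C.R_initM_apply]
      unfold Net.initM
      rw [← hsrc]
    · intro _
      unfold Net.initM
      rw [if_neg C.pe_ne_source]
      exact Nat.zero_le _
    · unfold Net.initM
      rw [if_pos hsrc]
  · rw [Finset.mem_inter] at hu
    have husdiff := Finset.mem_sdiff.1 hu.2
    obtain ⟨M, hMr, hen⟩ := C.hsound.1 u husdiff.1
    obtain ⟨M', hf⟩ : ∃ M', C.N.fire u M M' := ⟨_, Net.fire_exists hen⟩
    obtain ⟨m, hRm, hA, hS⟩ := C.Jinv M hMr
    have hfeed : C.ps ∈ C.N.post u := Net.mem_post_iff.2 (Net.mem_pre_iff.1 hu.1)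
    obtain ⟨⟨hA', hS'⟩, _⟩ := C.refeed hMr husdiff.2 hf hfeed hRm hA hS
    refine ⟨M', Net.reachable_trans' hMr (Net.reachable_fire hf), hA', hS', ?_⟩
    have hb := hf.2 C.ps
    rw [if_pos hfeed] at hb
    by_cases hpre : C.ps ∈ C.N.pre u
    · have := hen.2 _ hpre
      rw [if_pos hpre] at hb
      omega
    · rw [if_neg hpre] at hb
      omega

/-- Realize any reachable projection marking inside `N`. -/
theorem realize_m {m : Marking} (hm : C.Reach m) :
    ∃ M₁, C.N.reachable C.N.initM M₁ ∧ C.Agree M₁ m ∧ C.Slack M₁ m ∧ ∀ q, m q ≤ M₁ q := by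
  obtain ⟨M₀, hM₀, hA0, hS0, hps0⟩ := C.realization
  obtain ⟨σ, hσ⟩ := hm
  have hle : ∀ q, C.R.initM q ≤ M₀ q := by
    intro q
    rw [C.R_initM_apply]
    by_cases hq : q = C.ps
    · rw [if_pos hq, hq]
      exact hps0
    · rw [if_neg hq]
      omega
  obtain ⟨M₁, hseq, heq⟩ := C.liftRN hσ M₀ hle
  refine ⟨M₁, Net.reachable_trans' hM₀ ⟨σ, hseq⟩, ?_, ?_, ?_⟩
  · intro q hq h2
    have h1 := heq q
    have h3 := hA0 q hq h2
    omega
  · intro hnfed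
    have h1 := heq C.pe
    have h8 := hS0 hnfed
    omega
  · intro q
    have h1 := heq q
    have h5 := hle q
    omega

/-- Safety of the raw projection. -/
theorem R_safe {m : Marking} (hm : C.Reach m) : ∀ q, m q ≤ 1 := by
  obtain ⟨M₁, hM₁, _, _, hge⟩ := C.realize_m hm
  intro q
  exact le_trans (hge q) (C.hsafe M₁ hM₁ q)

/-- A reachable projection marking concentrated on `pe` is the final one. -/
theorem reach_concentrated {m : Marking} (hm : C.Reach m)
    (hz : ∀ q ∈ C.N.adjP C.T, q ≠ C.pe → m q = 0) : m = C.R.finalM := by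
  have hoff := C.Reach_zero_off hm
  have hzz : ∀ q, q ≠ C.pe → m q = 0 := by
    intro q hq
    by_cases hadj : q ∈ C.N.adjP C.T
    · exact hz q hadj hq
    · exact hoff q hadj
  obtain ⟨q0, hq0⟩ := C.Reach_nonzero hm
  have hq0pe : q0 = C.pe := by
    by_contra hne
    rw [hzz q0 hne] at hq0
    omega
  have hle := C.R_safe hm C.pe
  funext q
  rw [C.R_finalM_apply]
  by_cases hq : q = C.pe
  · rw [if_pos hq, hq]
    rw [hq0pe] at hq0
    omega
  · rw [if_neg hq]
    exact hzz q hq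

/-- The part can put a token on its exit point. -/
theorem emission : ∃ me, C.Reach me ∧ 1 ≤ me C.pe := by
  obtain ⟨t, ht⟩ := C.pe_spec.2.1
  rw [Finset.mem_inter] at ht
  have htT : t ∈ C.T := ht.2
  have hpost : C.pe ∈ C.N.post t := Net.mem_post_iff.2 (Net.mem_pre_iff.1 ht.1)
  obtain ⟨M, hMr, hen⟩ := C.hsound.1 t (C.hsub htT)
  obtain ⟨m, hRm, hA, hS⟩ := C.Jinv M hMr
  have hmp : ∀ p ∈ C.N.pre t, 1 ≤ m p := C.J_enables htT hA hS hen
  have hmr : C.Reach m := by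
    rcases hRm with h | h
    · exact h
    · exfalso
      obtain ⟨p, hp⟩ := C.trans_pre_nonempty (C.hsub htT)
      have h9 : m p = 0 := by rw [h]
      have := hmp p hp
      omega
  refine ⟨C.fireOut t m,
    Net.reachable_trans' hmr (Net.reachable_fire (C.R_fire_out htT hmp)), ?_⟩
  have hb := C.fireOut_balance t m hmp C.pe
  rw [if_pos hpost] at hb
  by_cases he : C.pe ∈ C.N.pre t
  · have := hmp _ he
    rw [if_pos he] at hb
    omega
  · rw [if_neg he] at hb
    omega

/-- No dead transitions in the raw projection. -/
theorem R_live : ∀ t ∈ C.T, ∃ m, C.Reach m ∧ C.R.enabled t m := by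
  intro t htT
  obtain ⟨M, hMr, hen⟩ := C.hsound.1 t (C.hsub htT)
  obtain ⟨m, hRm, hA, hS⟩ := C.Jinv M hMr
  have hmp : ∀ p ∈ C.N.pre t, 1 ≤ m p := C.J_enables htT hA hS hen
  have hmr : C.Reach m := by
    rcases hRm with h | h
    · exact h
    · exfalso
      obtain ⟨p, hp⟩ := C.trans_pre_nonempty (C.hsub htT)
      have h9 : m p = 0 := by rw [h]
      have := hmp p hp
      omega
  exact ⟨m, hmr, C.R_enabled_of htT hmp⟩

theorem neutral_step {M M' m : Marking} {t : ℕ} (hf : C.N.fire t M M') (htT : t ∉ C.T)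
    (hfeed : C.ps ∉ C.N.post t) (hcons : ¬(C.ps ∈ C.N.pre t ∧ C.ps ≠ C.pe))
    (hA : C.Agree M m) (hS : C.Slack M m) : C.Agree M' m ∧ C.Slack M' m := by
  have hu : t ∈ C.N.transitions := hf.1.1
  have hpe_npost : (C.N.post C.pe ∩ C.T).Nonempty → C.pe ∉ C.N.post t := by
    intro hnfed hc
    rcases C.out_post hu htT C.pe_mem_adjP hc with h | h
    · exact hfeed (h ▸ hc)
    · exact h.2 hnfed
  constructor
  · intro q hq h2
    by_cases h1 : q = C.ps
    · have hps_pre : C.ps ∉ C.N.pre t := fun hc => hcons ⟨hc, fun he => h2 (h1.trans he)⟩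
      have hb := hf.2 C.ps
      rw [if_neg hps_pre, if_neg hfeed] at hb
      rw [← hA q hq h2, h1]
      omega
    · obtain ⟨hp1, hp2⟩ := C.out_internal_untouched hu htT hq h1 h2
      rw [Net.fire_untouched hf hp1 hp2]
      exact hA q hq h2
  · intro hnfed
    have h8 := hS hnfed
    have hb := hf.2 C.pe
    rw [if_neg (hpe_npost hnfed)] at hb
    by_cases he : C.pe ∈ C.N.pre t <;> simp only [he, if_true, if_false] at hb <;> omega

/-- Completion transfer: along any completing run of `N`, the projection can
either complete, or it is parked at the (unfed) entry. -/
theorem comp : ∀ (σ : List ℕ) (M m : Marking),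
    C.N.reachable C.N.initM M → C.Reach m → C.Agree M m → C.Slack M m →
    C.N.firingSeq M σ C.N.finalM →
    C.R.reachable m C.R.finalM ∨
      (C.R.reachable m C.R.initM ∧ C.N.pre C.ps ∩ C.T = ∅ ∧ C.ps ≠ C.pe) := by
  intro σ
  induction σ with
  | nil =>
    intro M m hM hm hA hS hrun
    have hfin : C.N.finalM = M := hrun
    left
    have hz : ∀ q ∈ C.N.adjP C.T, q ≠ C.pe → m q = 0 := by
      intro q hq h2
      have h3 := hA q hq h2
      have h4 : M q = 0 := by
        rw [← hfin]
        unfold Net.finalM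
        rw [if_neg]
        intro hc
        rcases C.classify hq with h | h | h
        · exact C.ps_ne_sink (h ▸ hc)
        · exact h2 h
        · obtain ⟨p, hp⟩ := h.2.2.2
          have h0 : C.N.post q = ∅ := (C.hWF.2.2.2.2.1 q (C.adjP_places hq)).2 hc
          rw [h0] at hp
          exact Finset.notMem_empty p hp
      omega
    rw [C.reach_concentrated hm hz]
    exact ⟨[], rfl⟩
  | cons t σ' ih =>
    intro M m hM hm hA hS hrun
    obtain ⟨M₁, hf, hrest⟩ := hrun
    have hM₁ : C.N.reachable C.N.initM M₁ := Net.reachable_trans' hM (Net.reachable_fire hf)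
    by_cases htT : t ∈ C.T
    · have hmp : ∀ p ∈ C.N.pre t, 1 ≤ m p := C.J_enables htT hA hS hf.1
      have hfr := C.R_fire_out htT hmp
      have hbR := C.fireOut_balance t m hmp
      have hm₁ : C.Reach (C.fireOut t m) := Net.reachable_trans' hm (Net.reachable_fire hfr)
      have hA₁ : C.Agree M₁ (C.fireOut t m) := fun q hq h2 => step_eq hf.2 hbR q (hA q hq h2)
      have hS₁ : C.Slack M₁ (C.fireOut t m) := fun hnfed => step_le hf.2 hbR C.pe (hS hnfed)
      rcases ih M₁ _ hM₁ hm₁ hA₁ hS₁ hrest with h | ⟨h, h2, h3⟩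
      · exact Or.inl (Net.reachable_trans' (Net.reachable_fire hfr) h)
      · exact Or.inr ⟨Net.reachable_trans' (Net.reachable_fire hfr) h, h2, h3⟩
    · by_cases hfeed : C.ps ∈ C.N.post t
      · obtain ⟨_, hdisj⟩ := C.refeed hM htT hf hfeed (Or.inl hm) hA hS
        rcases hdisj with hz | ⟨hminit, hnof, hne⟩
        · left
          rw [C.reach_concentrated hm hz]
          exact ⟨[], rfl⟩
        · right
          rw [hminit]
          exact ⟨⟨[], rfl⟩, hnof, hne⟩
      · by_cases hcons : C.ps ∈ C.N.pre t ∧ C.ps ≠ C.pe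
        · right
          have hnof : C.N.pre C.ps ∩ C.T = ∅ := by
            rcases C.out_pre hf.1.1 htT C.ps_mem_adjP hcons.1 with h | h
            · exact absurd h hcons.2
            · exact h.2
          have hminit : m = C.R.initM := by
            refine C.persist_mark hnof hm ?_
            have h6 := hA C.ps C.ps_mem_adjP hcons.2
            have h7 := hf.1.2 _ hcons.1
            omega
          rw [hminit]
          exact ⟨⟨[], rfl⟩, hnof, hcons.2⟩
        · obtain ⟨hA₁, hS₁⟩ := C.neutral_step hf htT hfeed hcons hA hS
          exact ih M₁ m hM₁ hm hA₁ hS₁ hrest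

theorem comp_from {m : Marking} (hm : C.Reach m) :
    C.R.reachable m C.R.finalM ∨
      (C.R.reachable m C.R.initM ∧ C.N.pre C.ps ∩ C.T = ∅ ∧ C.ps ≠ C.pe) := by
  obtain ⟨M₁, hM₁, hA, hS, _⟩ := C.realize_m hm
  obtain ⟨σ, hσ⟩ := C.hsound.2.1 M₁ hM₁
  exact C.comp σ M₁ m hM₁ hm hA hS hσ

theorem R_complete_init : C.R.reachable C.R.initM C.R.finalM := by
  obtain ⟨me, hme, hpe⟩ := C.emission
  rcases C.comp_from hme with h | ⟨hrun, hnof, hne⟩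
  · exact Net.reachable_trans' hme h
  · exfalso
    obtain ⟨σ1, h1⟩ := hme
    obtain ⟨σ2, h2⟩ := hrun
    have htot : C.R.firingSeq C.R.initM (σ1 ++ σ2) C.R.initM :=
      Net.firingSeq_append.2 ⟨me, h1, h2⟩
    have hps1 : 1 ≤ C.R.initM C.ps := by
      rw [C.R_initM_apply, if_pos rfl]
    have h0 := C.persist_run hnof (σ1 ++ σ2) _ htot hps1
    have h1nil : σ1 = [] := (List.append_eq_nil_iff.1 h0).1
    rw [h1nil] at h1
    have hminit : me = C.R.initM := h1
    rw [hminit, C.R_initM_apply, if_neg (fun hc => hne hc.symm)] at hpe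
    omega

/-- Option to complete for the raw projection. -/
theorem R_complete {m : Marking} (hm : C.Reach m) : C.R.reachable m C.R.finalM := by
  rcases C.comp_from hm with h | ⟨hrun, _, _⟩
  · exact h
  · exact Net.reachable_trans' hrun C.R_complete_init

/-- Proper completion for the raw projection. -/
theorem R_proper {m : Marking} (hm : C.Reach m) (hpe : 1 ≤ m C.pe) : m = C.R.finalM := by
  obtain ⟨M₁, hM₁, hA, hS, hge⟩ := C.realize_m hm
  obtain ⟨σ', hσ'⟩ := C.R_complete hm
  obtain ⟨M₂, hseq, heq⟩ := C.liftRN hσ' M₁ hge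
  have hM₂ : C.N.reachable C.N.initM M₂ := Net.reachable_trans' hM₁ ⟨σ', hseq⟩
  have hfe : (fun q => M₂ q + (m q - C.R.finalM q)) = M₁ := by
    funext q
    have h1 := heq q
    rw [C.R_finalM_apply] at h1 ⊢
    by_cases hq : q = C.pe
    · rw [hq] at h1 ⊢
      rw [if_pos rfl] at h1 ⊢
      have h5 := hge C.pe
      omega
    · simp only [if_neg hq] at h1 ⊢
      omega
  have hD := Net.no_domination C.hsound (fun q => m q - C.R.finalM q) hM₂ (hfe ▸ hM₁)
  funext q
  have h3 : m q - C.R.finalM q = 0 := hD q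
  rw [C.R_finalM_apply] at h3 ⊢
  by_cases hq : q = C.pe
  · rw [if_pos hq] at h3 ⊢
    rw [hq] at h3 ⊢
    omega
  · rw [if_neg hq] at h3 ⊢
    omega

end CGCtx

namespace CGCtx

variable (C : CGCtx)

theorem path_from_ps {m : Marking} (hm : C.Reach m) :
    ∀ q, 1 ≤ m q → C.R.pathRel C.ps q := by
  refine Net.reachable_ind (P := fun m => ∀ q, 1 ≤ m q → C.R.pathRel C.ps q) ?_ ?_ m hm
  · intro q hq
    have hq' : q = C.ps := by
      by_contra hne
      rw [C.R_initM_apply, if_neg hne] at hq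
      omega
    rw [hq']
    exact Relation.ReflTransGen.refl
  · intro m t m' _ ih hf q hq
    have ht : t ∈ C.T := hf.1.1
    have hpath_t : C.R.pathRel C.ps t := by
      obtain ⟨p, hp⟩ := C.trans_pre_nonempty (C.hsub ht)
      have hpR : p ∈ C.R.pre t := by rw [C.R_pre_trans ht]; exact hp
      exact Relation.ReflTransGen.tail (ih p (hf.1.2 p hpR)) (Net.mem_pre_iff.1 hpR)
    by_cases hq' : q ∈ C.R.post t
    · exact Relation.ReflTransGen.tail hpath_t (Net.mem_post_iff.1 hq')
    · have hb := hf.2 q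
      rw [if_neg hq'] at hb
      refine ih q ?_
      by_cases hp : q ∈ C.R.pre t
      · exact hf.1.2 q hp
      · rw [if_neg hp] at hb
        omega

theorem path_to_pe : ∀ (σ : List ℕ) (m : Marking), C.R.firingSeq m σ C.R.finalM →
    ∀ q, 1 ≤ m q → C.R.pathRel q C.pe := by
  intro σ
  induction σ with
  | nil =>
    intro m h q hq
    have hfin : C.R.finalM = m := h
    rw [← hfin, C.R_finalM_apply] at hq
    have hq' : q = C.pe := by
      by_contra hne
      rw [if_neg hne] at hq
      omega
    rw [hq']
    exact Relation.ReflTransGen.refl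
  | cons t σ' ih =>
    intro m h q hq
    obtain ⟨m₁, hf, hrest⟩ := h
    by_cases hp : q ∈ C.R.pre t
    · obtain ⟨p2, hp2⟩ : (C.R.post t).Nonempty := by
        rw [C.R_post_trans hf.1.1]
        exact C.trans_post_nonempty (C.hsub hf.1.1)
      have hm₁p2 : 1 ≤ m₁ p2 := by
        have hb := hf.2 p2
        rw [if_pos hp2] at hb
        by_cases h2 : p2 ∈ C.R.pre t
        · have := hf.1.2 p2 h2
          rw [if_pos h2] at hb
          omega
        · rw [if_neg h2] at hb
          omega
      exact Relation.ReflTransGen.head (Net.mem_pre_iff.1 hp)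
        (Relation.ReflTransGen.head (Net.mem_post_iff.1 hp2) (ih m₁ hrest p2 hm₁p2))
    · have hb := hf.2 q
      rw [if_neg hp] at hb
      refine ih m₁ hrest q ?_
      by_cases h2 : q ∈ C.R.post t
      · rw [if_pos h2] at hb
        omega
      · rw [if_neg h2] at hb
        omega

theorem marked_somewhere {q : ℕ} (hq : q ∈ C.N.adjP C.T) : ∃ m, C.Reach m ∧ 1 ≤ m q := by
  obtain ⟨_, ⟨v, hv⟩⟩ := (C.mem_adjP_iff).1 hq
  rw [Finset.mem_inter, Finset.mem_union] at hv
  obtain ⟨hv1, hvT⟩ := hv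
  obtain ⟨m, hm, hen⟩ := C.R_live v hvT
  have hmp : ∀ p ∈ C.N.pre v, 1 ≤ m p := by
    intro p hp
    exact hen.2 p (by rw [C.R_pre_trans hvT]; exact hp)
  rcases hv1 with h | h
  · have hqpost : q ∈ C.N.post v := Net.mem_post_iff.2 (Net.mem_pre_iff.1 h)
    refine ⟨C.fireOut v m,
      Net.reachable_trans' hm (Net.reachable_fire (C.R_fire_out hvT hmp)), ?_⟩
    have hb := C.fireOut_balance v m hmp q
    rw [if_pos hqpost] at hb
    by_cases h2 : q ∈ C.N.pre v
    · have := hmp q h2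
      rw [if_pos h2] at hb
      omega
    · rw [if_neg h2] at hb
      omega
  · exact ⟨m, hm, hmp q (Net.mem_pre_iff.2 (Net.mem_post_iff.1 h))⟩

theorem path_place {q : ℕ} (hq : q ∈ C.N.adjP C.T) :
    C.R.pathRel C.ps q ∧ C.R.pathRel q C.pe := by
  obtain ⟨m, hm, hmq⟩ := C.marked_somewhere hq
  obtain ⟨σ, hσ⟩ := C.R_complete hm
  exact ⟨C.path_from_ps hm q hmq, C.path_to_pe σ m hσ q hmq⟩

theorem path_trans {t : ℕ} (ht : t ∈ C.T) :
    C.R.pathRel C.ps t ∧ C.R.pathRel t C.pe := by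
  obtain ⟨m, hm, hen⟩ := C.R_live t ht
  constructor
  · obtain ⟨p, hp⟩ := C.trans_pre_nonempty (C.hsub ht)
    have hpR : p ∈ C.R.pre t := by rw [C.R_pre_trans ht]; exact hp
    exact Relation.ReflTransGen.tail (C.path_from_ps hm p (hen.2 p hpR))
      (Net.mem_pre_iff.1 hpR)
  · obtain ⟨p, hp⟩ := C.trans_post_nonempty (C.hsub ht)
    have hpR : p ∈ C.R.post t := by rw [C.R_post_trans ht]; exact hp
    have hadj : p ∈ C.N.adjP C.T := C.postT_sub_adjP ht hp
    exact Relation.ReflTransGen.head (Net.mem_post_iff.1 hpR) (C.path_place hadj).2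

end CGCtx

namespace CGCtx

variable (C : CGCtx)

def bb : ℕ := C.R.freshBase

def nS : Prop := (C.R.pre C.ps).Nonempty

def nE : Prop := (C.R.post C.pe).Nonempty

/-- The normalized projection. -/
def Cn : Net := Normalize C.R C.ps C.pe

theorem Cn_eq : cgproject C.N C.T = C.Cn := by
  show Normalize C.R C.R.source C.R.sink = C.Cn
  rw [C.R_source, C.R_sink]
  rfl

theorem Cn_places : C.Cn.places =
    C.R.places ∪ (if C.nS then {C.bb} else ∅) ∪ (if C.nE then {C.bb+2} else ∅) := by
  simp only [Cn, Normalize, nS, nE, bb, C.R_trans]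
  split_ifs <;> simp only [*, if_true, if_false]

theorem Cn_trans : C.Cn.transitions =
    C.T ∪ (if C.nS then {C.bb+1} else ∅) ∪ (if C.nE then {C.bb+3} else ∅) := by
  simp only [Cn, Normalize, nS, nE, bb, C.R_trans]
  split_ifs <;> simp only [*, if_true, if_false]

theorem Cn_flow : C.Cn.flow =
    C.R.flow ∪ (if C.nS then {(C.bb, C.bb+1), (C.bb+1, C.ps)} else ∅)
            ∪ (if C.nE then {(C.pe, C.bb+3), (C.bb+3, C.bb+2)} else ∅) := by
  simp only [Cn, Normalize, nS, nE, bb, C.R_trans]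
  split_ifs <;> simp only [*, if_true, if_false]

theorem Cn_source : C.Cn.source = if C.nS then C.bb else C.ps := by
  simp only [Cn, Normalize, nS, nE, bb, C.R_trans]
  split_ifs <;> simp only [*, if_true, if_false]

theorem Cn_sink : C.Cn.sink = if C.nE then C.bb+2 else C.pe := by
  simp only [Cn, Normalize, nS, nE, bb, C.R_trans]
  split_ifs <;> simp only [*, if_true, if_false]

theorem bb_def : C.bb = (C.R.places ∪ C.R.transitions ∪ {C.R.source, C.R.sink}).sup id + 1 := rfl

theorem lt_bb : ∀ x, (x ∈ C.N.adjP C.T ∨ x ∈ C.T) → x < C.bb := by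
  intro x hx
  have hmem : x ∈ C.R.places ∪ C.R.transitions ∪ {C.R.source, C.R.sink} := by
    rcases hx with h | h
    · exact Finset.mem_union_left _ (Finset.mem_union_left _ h)
    · exact Finset.mem_union_left _ (Finset.mem_union_right _ h)
  have h2 : x ≤ (C.R.places ∪ C.R.transitions ∪ {C.R.source, C.R.sink}).sup id :=
    Finset.le_sup (f := id) hmem
  rw [bb_def]
  omega

theorem ps_lt_bb : C.ps < C.bb := C.lt_bb _ (Or.inl C.ps_mem_adjP)

theorem pe_lt_bb : C.pe < C.bb := C.lt_bb _ (Or.inl C.pe_mem_adjP)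

theorem R_flow_lt {e : ℕ × ℕ} (he : e ∈ C.R.flow) : e.1 < C.bb ∧ e.2 < C.bb := by
  obtain ⟨_, hc⟩ := C.R_flow_mem.1 he
  rcases hc with ⟨h1, h2⟩ | ⟨h1, h2⟩
  · exact ⟨C.lt_bb _ (Or.inl h1), C.lt_bb _ (Or.inr h2)⟩
  · exact ⟨C.lt_bb _ (Or.inr h1), C.lt_bb _ (Or.inl h2)⟩

theorem Cn_flow_mem {e : ℕ × ℕ} : e ∈ C.Cn.flow ↔ e ∈ C.R.flow ∨
    (C.nS ∧ (e = (C.bb, C.bb+1) ∨ e = (C.bb+1, C.ps))) ∨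
    (C.nE ∧ (e = (C.pe, C.bb+3) ∨ e = (C.bb+3, C.bb+2))) := by
  rw [Cn_flow]
  by_cases hS : C.nS <;> by_cases hE : C.nE <;>
    simp [hS, hE] <;> tauto

theorem Cn_pre_small {x : ℕ} (hx : x < C.bb) (hxps : x ≠ C.ps) : C.Cn.pre x = C.R.pre x := by
  ext y
  rw [Net.mem_pre_iff, Net.mem_pre_iff, C.Cn_flow_mem]
  constructor
  · rintro (h | ⟨_, (h | h)⟩ | ⟨_, (h | h)⟩)
    · exact h
    · have := congrArg Prod.snd h
      simp only at this
      omega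
    · have := congrArg Prod.snd h
      simp only at this
      exact absurd this hxps
    · have h2 := congrArg Prod.snd h
      simp only at h2
      have := C.pe_lt_bb
      omega
    · have := congrArg Prod.snd h
      simp only at this
      omega
  · intro h
    exact Or.inl h

theorem Cn_post_small {x : ℕ} (hx : x < C.bb) (hxpe : x ≠ C.pe) : C.Cn.post x = C.R.post x := by
  ext y
  rw [Net.mem_post_iff, Net.mem_post_iff, C.Cn_flow_mem]
  constructor
  · rintro (h | ⟨_, (h | h)⟩ | ⟨_, (h | h)⟩)
    · exact h
    · have := congrArg Prod.fst h
      simp only at this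
      omega
    · have := congrArg Prod.fst h
      simp only at this
      omega
    · have := congrArg Prod.fst h
      simp only at this
      exact absurd this hxpe
    · have := congrArg Prod.fst h
      simp only at this
      omega
  · intro h
    exact Or.inl h

theorem T_ne_ps {t : ℕ} (ht : t ∈ C.T) : t ≠ C.ps := by
  intro h
  exact (Finset.disjoint_left.1 C.disj C.ps_spec.1) (h ▸ C.hsub ht)

theorem T_ne_pe {t : ℕ} (ht : t ∈ C.T) : t ≠ C.pe := by
  intro h
  exact (Finset.disjoint_left.1 C.disj C.pe_spec.1) (h ▸ C.hsub ht)

theorem Cn_pre_T {t : ℕ} (ht : t ∈ C.T) : C.Cn.pre t = C.R.pre t :=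
  C.Cn_pre_small (C.lt_bb t (Or.inr ht)) (C.T_ne_ps ht)

theorem Cn_post_T {t : ℕ} (ht : t ∈ C.T) : C.Cn.post t = C.R.post t :=
  C.Cn_post_small (C.lt_bb t (Or.inr ht)) (C.T_ne_pe ht)

theorem pair_ne_of_fst {a b c d : ℕ} (h : a ≠ c) : (a, b) ≠ (c, d) := by
  intro hc
  exact h (congrArg Prod.fst hc)

theorem Cn_pre_b (hS : C.nS) : C.Cn.pre C.bb = ∅ := by
  ext y
  simp only [Finset.notMem_empty, iff_false]
  rw [Net.mem_pre_iff, C.Cn_flow_mem]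
  rintro (h | ⟨_, (h | h)⟩ | ⟨_, (h | h)⟩) <;>
    first
    | · have := (C.R_flow_lt h).2
        simp only at this
        omega
    | · have := congrArg Prod.snd h
        simp only at this
        have h1 := C.ps_lt_bb
        have h2 := C.pe_lt_bb
        omega

theorem Cn_pre_b1 (hS : C.nS) : C.Cn.pre (C.bb+1) = {C.bb} := by
  ext y
  rw [Finset.mem_singleton, Net.mem_pre_iff, C.Cn_flow_mem]
  constructor
  · rintro (h | ⟨_, (h | h)⟩ | ⟨_, (h | h)⟩)
    · have := (C.R_flow_lt h).2
      simp only at this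
      omega
    · exact congrArg Prod.fst h
    · have := congrArg Prod.snd h
      simp only at this
      have h1 := C.ps_lt_bb
      omega
    · have := congrArg Prod.snd h
      simp only at this
      omega
    · have := congrArg Prod.snd h
      simp only at this
      omega
  · intro h
    subst h
    exact Or.inr (Or.inl ⟨hS, Or.inl rfl⟩)

theorem Cn_post_b1 (hS : C.nS) : C.Cn.post (C.bb+1) = {C.ps} := by
  ext y
  rw [Finset.mem_singleton, Net.mem_post_iff, C.Cn_flow_mem]
  constructor
  · rintro (h | ⟨_, (h | h)⟩ | ⟨_, (h | h)⟩)
    · have := (C.R_flow_lt h).1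
      simp only at this
      omega
    · have := congrArg Prod.fst h
      simp only at this
      omega
    · exact (congrArg Prod.snd h)
    · have := congrArg Prod.fst h
      simp only at this
      have h1 := C.pe_lt_bb
      omega
    · have := congrArg Prod.fst h
      simp only at this
      omega
  · intro h
    subst h
    exact Or.inr (Or.inl ⟨hS, Or.inr rfl⟩)

theorem Cn_post_b (hS : C.nS) : C.Cn.post C.bb = {C.bb+1} := by
  ext y
  rw [Finset.mem_singleton, Net.mem_post_iff, C.Cn_flow_mem]
  constructor
  · rintro (h | ⟨_, (h | h)⟩ | ⟨_, (h | h)⟩)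
    · have := (C.R_flow_lt h).1
      simp only at this
      omega
    · exact congrArg Prod.snd h
    · have := congrArg Prod.fst h
      simp only at this
      omega
    · have := congrArg Prod.fst h
      simp only at this
      have h1 := C.pe_lt_bb
      omega
    · have := congrArg Prod.fst h
      simp only at this
      omega
  · intro h
    subst h
    exact Or.inr (Or.inl ⟨hS, Or.inl rfl⟩)

theorem Cn_pre_b3 (hE : C.nE) : C.Cn.pre (C.bb+3) = {C.pe} := by
  ext y
  rw [Finset.mem_singleton, Net.mem_pre_iff, C.Cn_flow_mem]
  constructor
  · rintro (h | ⟨_, (h | h)⟩ | ⟨_, (h | h)⟩)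
    · have := (C.R_flow_lt h).2
      simp only at this
      omega
    · have := congrArg Prod.snd h
      simp only at this
      omega
    · have := congrArg Prod.snd h
      simp only at this
      have h1 := C.ps_lt_bb
      omega
    · exact congrArg Prod.fst h
    · have := congrArg Prod.snd h
      simp only at this
      omega
  · intro h
    subst h
    exact Or.inr (Or.inr ⟨hE, Or.inl rfl⟩)

theorem Cn_post_b3 (hE : C.nE) : C.Cn.post (C.bb+3) = {C.bb+2} := by
  ext y
  rw [Finset.mem_singleton, Net.mem_post_iff, C.Cn_flow_mem]
  constructor
  · rintro (h | ⟨_, (h | h)⟩ | ⟨_, (h | h)⟩)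
    · have := (C.R_flow_lt h).1
      simp only at this
      omega
    · have := congrArg Prod.fst h
      simp only at this
      omega
    · have := congrArg Prod.fst h
      simp only at this
      omega
    · have := congrArg Prod.fst h
      simp only at this
      have h1 := C.pe_lt_bb
      omega
    · exact congrArg Prod.snd h
  · intro h
    subst h
    exact Or.inr (Or.inr ⟨hE, Or.inr rfl⟩)

theorem Cn_pre_b2 (hE : C.nE) : C.Cn.pre (C.bb+2) = {C.bb+3} := by
  ext y
  rw [Finset.mem_singleton, Net.mem_pre_iff, C.Cn_flow_mem]
  constructor
  · rintro (h | ⟨_, (h | h)⟩ | ⟨_, (h | h)⟩)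
    · have := (C.R_flow_lt h).2
      simp only at this
      omega
    · have := congrArg Prod.snd h
      simp only at this
      omega
    · have := congrArg Prod.snd h
      simp only at this
      have h1 := C.ps_lt_bb
      omega
    · have := congrArg Prod.snd h
      simp only at this
      have h1 := C.pe_lt_bb
      omega
    · exact congrArg Prod.fst h
  · intro h
    subst h
    exact Or.inr (Or.inr ⟨hE, Or.inr rfl⟩)

theorem Cn_post_b2 (hE : C.nE) : C.Cn.post (C.bb+2) = ∅ := by
  ext y
  simp only [Finset.notMem_empty, iff_false]
  rw [Net.mem_post_iff, C.Cn_flow_mem]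
  rintro (h | ⟨_, (h | h)⟩ | ⟨_, (h | h)⟩) <;>
    first
    | · have := (C.R_flow_lt h).1
        simp only at this
        omega
    | · have := congrArg Prod.fst h
        simp only at this
        have h1 := C.ps_lt_bb
        have h2 := C.pe_lt_bb
        omega

theorem R_pre_sub (x : ℕ) : C.R.pre x ⊆ C.Cn.pre x := by
  intro y hy
  rw [Net.mem_pre_iff] at hy ⊢
  exact C.Cn_flow_mem.2 (Or.inl hy)

theorem R_post_sub (x : ℕ) : C.R.post x ⊆ C.Cn.post x := by
  intro y hy
  rw [Net.mem_post_iff] at hy ⊢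
  exact C.Cn_flow_mem.2 (Or.inl hy)

theorem nS_iff : C.nS ↔ (C.N.pre C.ps ∩ C.T).Nonempty := by
  unfold nS
  rw [C.R_pre_place C.ps_mem_adjP]

theorem nE_iff : C.nE ↔ (C.N.post C.pe ∩ C.T).Nonempty := by
  unfold nE
  rw [C.R_post_place C.pe_mem_adjP]

end CGCtx

namespace CGCtx

variable (C : CGCtx)

theorem bb_not_adjP : C.bb ∉ C.N.adjP C.T := fun h => absurd (C.lt_bb _ (Or.inl h)) (lt_irrefl _)

theorem Cn_trans_mem {t : ℕ} (ht : t ∈ C.Cn.transitions) :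
    t ∈ C.T ∨ (C.nS ∧ t = C.bb+1) ∨ (C.nE ∧ t = C.bb+3) := by
  rw [C.Cn_trans, Finset.mem_union, Finset.mem_union] at ht
  rcases ht with (h | h) | h
  · exact Or.inl h
  · by_cases hS : C.nS
    · rw [if_pos hS, Finset.mem_singleton] at h
      exact Or.inr (Or.inl ⟨hS, h⟩)
    · rw [if_neg hS] at h
      exact absurd h (Finset.notMem_empty t)
  · by_cases hE : C.nE
    · rw [if_pos hE, Finset.mem_singleton] at h
      exact Or.inr (Or.inr ⟨hE, h⟩)
    · rw [if_neg hE] at h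
      exact absurd h (Finset.notMem_empty t)

theorem T_mem_Cn {t : ℕ} (ht : t ∈ C.T) : t ∈ C.Cn.transitions := by
  rw [C.Cn_trans]
  exact Finset.mem_union_left _ (Finset.mem_union_left _ ht)

theorem b1_mem_Cn (hS : C.nS) : C.bb+1 ∈ C.Cn.transitions := by
  rw [C.Cn_trans]
  refine Finset.mem_union_left _ (Finset.mem_union_right _ ?_)
  rw [if_pos hS]
  exact Finset.mem_singleton_self _

theorem b3_mem_Cn (hE : C.nE) : C.bb+3 ∈ C.Cn.transitions := by
  rw [C.Cn_trans]
  refine Finset.mem_union_right _ ?_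
  rw [if_pos hE]
  exact Finset.mem_singleton_self _

theorem Cn_fire_of_R {t : ℕ} {m m' : Marking} (hf : C.R.fire t m m') : C.Cn.fire t m m' := by
  have ht : t ∈ C.T := hf.1.1
  refine ⟨⟨C.T_mem_Cn ht, fun p hp => hf.1.2 p (by rwa [C.Cn_pre_T ht] at hp)⟩, fun p => ?_⟩
  rw [C.Cn_pre_T ht, C.Cn_post_T ht]
  exact hf.2 p

theorem R_fire_of_Cn {t : ℕ} {m m' : Marking} (ht : t ∈ C.T) (hf : C.Cn.fire t m m') :
    C.R.fire t m m' := by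
  refine ⟨⟨ht, fun p hp => hf.1.2 p (by rwa [C.Cn_pre_T ht])⟩, fun p => ?_⟩
  have hb := hf.2 p
  rwa [C.Cn_pre_T ht, C.Cn_post_T ht] at hb

theorem Cn_seq_of_R {σ : List ℕ} {m m' : Marking} (h : C.R.firingSeq m σ m') :
    C.Cn.firingSeq m σ m' := by
  induction σ generalizing m with
  | nil => exact h
  | cons t σ ih =>
    obtain ⟨m₁, hf, hrest⟩ := h
    exact ⟨m₁, C.Cn_fire_of_R hf, ih hrest⟩

def mB : Marking := fun q => if q = C.bb then 1 else 0

def mB2 : Marking := fun q => if q = C.bb+2 then 1 else 0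

theorem mB_apply (q : ℕ) : C.mB q = if q = C.bb then 1 else 0 := rfl

theorem mB2_apply (q : ℕ) : C.mB2 q = if q = C.bb+2 then 1 else 0 := rfl

theorem Cn_initM_S (hS : C.nS) : C.Cn.initM = C.mB := by
  funext q
  show (if q = C.Cn.source then 1 else 0) = (if q = C.bb then 1 else 0)
  rw [C.Cn_source, if_pos hS]

theorem Cn_initM_nS (h : ¬C.nS) : C.Cn.initM = C.R.initM := by
  funext q
  show (if q = C.Cn.source then 1 else 0) = C.R.initM q
  rw [C.Cn_source, if_neg h, C.R_initM_apply]

theorem Cn_finalM_E (hE : C.nE) : C.Cn.finalM = C.mB2 := by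
  funext q
  show (if q = C.Cn.sink then 1 else 0) = (if q = C.bb+2 then 1 else 0)
  rw [C.Cn_sink, if_pos hE]

theorem Cn_finalM_nE (h : ¬C.nE) : C.Cn.finalM = C.R.finalM := by
  funext q
  show (if q = C.Cn.sink then 1 else 0) = C.R.finalM q
  rw [C.Cn_sink, if_neg h, C.R_finalM_apply]

def Phase (M : Marking) : Prop :=
  (C.nS ∧ M = C.mB) ∨ C.Reach M ∨ (C.nE ∧ M = C.mB2)

theorem fire_b1 (hS : C.nS) : C.Cn.fire (C.bb+1) C.mB C.R.initM := by
  refine ⟨⟨C.b1_mem_Cn hS, ?_⟩, ?_⟩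
  · intro p hp
    rw [C.Cn_pre_b1 hS, Finset.mem_singleton] at hp
    rw [hp, C.mB_apply, if_pos rfl]
  · intro p
    have hlt := C.ps_lt_bb
    rw [C.Cn_pre_b1 hS, C.Cn_post_b1 hS, C.R_initM_apply, C.mB_apply]
    simp only [Finset.mem_singleton]
    split_ifs <;> omega

theorem fire_b3 (hE : C.nE) : C.Cn.fire (C.bb+3) C.R.finalM C.mB2 := by
  refine ⟨⟨C.b3_mem_Cn hE, ?_⟩, ?_⟩
  · intro p hp
    rw [C.Cn_pre_b3 hE, Finset.mem_singleton] at hp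
    rw [hp, C.R_finalM_apply, if_pos rfl]
  · intro p
    have hlt := C.pe_lt_bb
    rw [C.Cn_pre_b3 hE, C.Cn_post_b3 hE, C.R_finalM_apply, C.mB2_apply]
    simp only [Finset.mem_singleton]
    split_ifs <;> omega

theorem Cn_char : ∀ M, C.Cn.reachable C.Cn.initM M → C.Phase M := by
  refine Net.reachable_ind (P := C.Phase) ?_ ?_
  · by_cases hS : C.nS
    · exact Or.inl ⟨hS, C.Cn_initM_S hS⟩
    · refine Or.inr (Or.inl ?_)
      rw [C.Cn_initM_nS hS]
      exact C.Reach_init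
  · rintro M t M' _ hp hf
    rcases C.Cn_trans_mem hf.1.1 with htT | ⟨hS, ht1⟩ | ⟨hE, ht3⟩
    · rcases hp with ⟨hS, hM⟩ | hM | ⟨hE, hM⟩
      · exfalso
        obtain ⟨p, hp'⟩ := C.trans_pre_nonempty (C.hsub htT)
        have hpC : p ∈ C.Cn.pre t := by
          rw [C.Cn_pre_T htT, C.R_pre_trans htT]
          exact hp'
        have h1 := hf.1.2 p hpC
        rw [hM, C.mB_apply] at h1
        have hlt := C.lt_bb p (Or.inl (C.preT_sub_adjP htT hp'))
        rw [if_neg (by omega)] at h1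
        omega
      · exact Or.inr (Or.inl (Net.reachable_trans' hM
          (Net.reachable_fire (C.R_fire_of_Cn htT hf))))
      · exfalso
        obtain ⟨p, hp'⟩ := C.trans_pre_nonempty (C.hsub htT)
        have hpC : p ∈ C.Cn.pre t := by
          rw [C.Cn_pre_T htT, C.R_pre_trans htT]
          exact hp'
        have h1 := hf.1.2 p hpC
        rw [hM, C.mB2_apply] at h1
        have hlt := C.lt_bb p (Or.inl (C.preT_sub_adjP htT hp'))
        rw [if_neg (by omega)] at h1
        omega
    · subst ht1
      rcases hp with ⟨hS', hM⟩ | hM | ⟨hE, hM⟩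
      · refine Or.inr (Or.inl ?_)
        have hM' : M' = C.R.initM := by
          funext q
          have hb := hf.2 q
          rw [C.Cn_pre_b1 hS, C.Cn_post_b1 hS, hM] at hb
          rw [C.R_initM_apply]
          simp only [C.mB_apply, Finset.mem_singleton] at hb
          have h1 := C.ps_lt_bb
          split_ifs at hb ⊢ <;> omega
        rw [hM']
        exact C.Reach_init
      · exfalso
        have h1 := hf.1.2 C.bb (by
          rw [C.Cn_pre_b1 hS]
          exact Finset.mem_singleton_self _)
        have h2 := C.Reach_zero_off hM C.bb C.bb_not_adjP
        omega
      · exfalso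
        have h1 := hf.1.2 C.bb (by
          rw [C.Cn_pre_b1 hS]
          exact Finset.mem_singleton_self _)
        rw [hM, C.mB2_apply, if_neg (by omega)] at h1
        omega
    · subst ht3
      rcases hp with ⟨hS, hM⟩ | hM | ⟨hE', hM⟩
      · exfalso
        have h1 := hf.1.2 C.pe (by
          rw [C.Cn_pre_b3 hE]
          exact Finset.mem_singleton_self _)
        have hlt := C.pe_lt_bb
        rw [hM, C.mB_apply, if_neg (by omega)] at h1
        omega
      · refine Or.inr (Or.inr ⟨hE, ?_⟩)
        have hMpe : 1 ≤ M C.pe := hf.1.2 C.pe (by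
          rw [C.Cn_pre_b3 hE]
          exact Finset.mem_singleton_self _)
        have hMfin : M = C.R.finalM := C.R_proper hM hMpe
        funext q
        have hb := hf.2 q
        rw [C.Cn_pre_b3 hE, C.Cn_post_b3 hE, hMfin, C.R_finalM_apply] at hb
        rw [C.mB2_apply]
        simp only [Finset.mem_singleton] at hb
        have h1 := C.pe_lt_bb
        split_ifs at hb ⊢ <;> omega
      · exfalso
        have h1 := hf.1.2 C.pe (by
          rw [C.Cn_pre_b3 hE]
          exact Finset.mem_singleton_self _)
        have hlt := C.pe_lt_bb
        rw [hM, C.mB2_apply, if_neg (by omega)] at h1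
        omega

theorem Cn_reach_R {m : Marking} (hm : C.Reach m) : C.Cn.reachable C.Cn.initM m := by
  obtain ⟨σ, hσ⟩ := hm
  by_cases hS : C.nS
  · rw [C.Cn_initM_S hS]
    exact Net.reachable_trans' (Net.reachable_fire (C.fire_b1 hS)) ⟨σ, C.Cn_seq_of_R hσ⟩
  · rw [C.Cn_initM_nS hS]
    exact ⟨σ, C.Cn_seq_of_R hσ⟩

theorem fin_from_R {m : Marking} (hm : C.Reach m) : C.Cn.reachable m C.Cn.finalM := by
  obtain ⟨σ, hσ⟩ := C.R_complete hm
  by_cases hE : C.nE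
  · rw [C.Cn_finalM_E hE]
    exact Net.reachable_trans' ⟨σ, C.Cn_seq_of_R hσ⟩ (Net.reachable_fire (C.fire_b3 hE))
  · rw [C.Cn_finalM_nE hE]
    exact ⟨σ, C.Cn_seq_of_R hσ⟩

end CGCtx

namespace CGCtx

variable (C : CGCtx)

theorem Cn_Safe : C.Cn.Safe := by
  intro M hM p
  rcases C.Cn_char M hM with ⟨_, hMe⟩ | hMe | ⟨_, hMe⟩
  · rw [hMe, C.mB_apply]
    split_ifs <;> omega
  · exact C.R_safe hMe p
  · rw [hMe, C.mB2_apply]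
    split_ifs <;> omega

theorem Cn_Sound : C.Cn.Sound := by
  refine ⟨?_, ?_, ?_⟩
  · intro t ht
    rcases C.Cn_trans_mem ht with htT | ⟨hS, ht1⟩ | ⟨hE, ht3⟩
    · obtain ⟨m, hm, hen⟩ := C.R_live t htT
      refine ⟨m, C.Cn_reach_R hm, ⟨C.T_mem_Cn htT, ?_⟩⟩
      intro p hp
      rw [C.Cn_pre_T htT] at hp
      exact hen.2 p hp
    · subst ht1
      refine ⟨C.mB, ?_, (C.fire_b1 hS).1⟩
      rw [← C.Cn_initM_S hS]
      exact ⟨[], rfl⟩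
    · subst ht3
      exact ⟨C.R.finalM, C.Cn_reach_R C.R_complete_init, (C.fire_b3 hE).1⟩
  · intro M hM
    rcases C.Cn_char M hM with ⟨hS, hMe⟩ | hMe | ⟨hE, hMe⟩
    · rw [hMe]
      exact Net.reachable_trans' (Net.reachable_fire (C.fire_b1 hS))
        (C.fin_from_R C.Reach_init)
    · exact C.fin_from_R hMe
    · rw [hMe, ← C.Cn_finalM_E hE]
      exact ⟨[], rfl⟩
  · intro M hM hsink
    rcases C.Cn_char M hM with ⟨hS, hMe⟩ | hMe | ⟨hE, hMe⟩
    · exfalso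
      rw [hMe, C.mB_apply, C.Cn_sink] at hsink
      by_cases hE : C.nE
      · rw [if_pos hE, if_neg (by omega)] at hsink
        omega
      · rw [if_neg hE] at hsink
        have := C.pe_lt_bb
        rw [if_neg (by omega)] at hsink
        omega
    · by_cases hE : C.nE
      · exfalso
        rw [C.Cn_sink, if_pos hE] at hsink
        have h0 := C.Reach_zero_off hMe (C.bb+2) (by
          intro hc
          have := C.lt_bb _ (Or.inl hc)
          omega)
        omega
      · rw [C.Cn_sink, if_neg hE] at hsink
        rw [C.R_proper hMe hsink, C.Cn_finalM_nE hE]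
    · rw [hMe, C.Cn_finalM_E hE]

end CGCtx

namespace CGCtx

variable (C : CGCtx)

theorem Cn_places_mem {p : ℕ} (hp : p ∈ C.Cn.places) :
    p ∈ C.N.adjP C.T ∨ (C.nS ∧ p = C.bb) ∨ (C.nE ∧ p = C.bb+2) := by
  rw [C.Cn_places, Finset.mem_union, Finset.mem_union] at hp
  rcases hp with (h | h) | h
  · exact Or.inl h
  · by_cases hS : C.nS
    · rw [if_pos hS, Finset.mem_singleton] at h
      exact Or.inr (Or.inl ⟨hS, h⟩)
    · rw [if_neg hS] at h
      exact absurd h (Finset.notMem_empty p)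
  · by_cases hE : C.nE
    · rw [if_pos hE, Finset.mem_singleton] at h
      exact Or.inr (Or.inr ⟨hE, h⟩)
    · rw [if_neg hE] at h
      exact absurd h (Finset.notMem_empty p)

theorem adjP_mem_Cn {p : ℕ} (hp : p ∈ C.N.adjP C.T) : p ∈ C.Cn.places := by
  rw [C.Cn_places]
  exact Finset.mem_union_left _ (Finset.mem_union_left _ hp)

theorem b_mem_Cn (hS : C.nS) : C.bb ∈ C.Cn.places := by
  rw [C.Cn_places]
  refine Finset.mem_union_left _ (Finset.mem_union_right _ ?_)
  rw [if_pos hS]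
  exact Finset.mem_singleton_self _

theorem b2_mem_Cn (hE : C.nE) : C.bb+2 ∈ C.Cn.places := by
  rw [C.Cn_places]
  refine Finset.mem_union_right _ ?_
  rw [if_pos hE]
  exact Finset.mem_singleton_self _

theorem Cn_pre_ps : C.Cn.pre C.ps = C.R.pre C.ps ∪ (if C.nS then {C.bb+1} else ∅) := by
  have hlt := C.ps_lt_bb
  have hlt2 := C.pe_lt_bb
  ext y
  rw [Net.mem_pre_iff, Finset.mem_union, Net.mem_pre_iff, C.Cn_flow_mem]
  constructor
  · rintro (h | ⟨hS, (h | h)⟩ | ⟨hE, (h | h)⟩)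
    · exact Or.inl h
    · have := congrArg Prod.snd h
      simp only at this
      omega
    · right
      rw [if_pos hS, Finset.mem_singleton]
      exact congrArg Prod.fst h
    · have := congrArg Prod.snd h
      simp only at this
      omega
    · have := congrArg Prod.snd h
      simp only at this
      omega
  · rintro (h | h)
    · exact Or.inl h
    · by_cases hS : C.nS
      · rw [if_pos hS, Finset.mem_singleton] at h
        subst h
        exact Or.inr (Or.inl ⟨hS, Or.inr rfl⟩)
      · rw [if_neg hS] at h
        exact absurd h (Finset.notMem_empty y)

theorem Cn_post_pe : C.Cn.post C.pe = C.R.post C.pe ∪ (if C.nE then {C.bb+3} else ∅) := by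
  have hlt := C.ps_lt_bb
  have hlt2 := C.pe_lt_bb
  ext y
  rw [Net.mem_post_iff, Finset.mem_union, Net.mem_post_iff, C.Cn_flow_mem]
  constructor
  · rintro (h | ⟨hS, (h | h)⟩ | ⟨hE, (h | h)⟩)
    · exact Or.inl h
    · have := congrArg Prod.fst h
      simp only at this
      omega
    · have := congrArg Prod.fst h
      simp only at this
      omega
    · right
      rw [if_pos hE, Finset.mem_singleton]
      exact congrArg Prod.snd h
    · have := congrArg Prod.fst h
      simp only at this
      omega
  · rintro (h | h)
    · exact Or.inl h
    · by_cases hE : C.nE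
      · rw [if_pos hE, Finset.mem_singleton] at h
        subst h
        exact Or.inr (Or.inr ⟨hE, Or.inl rfl⟩)
      · rw [if_neg hE] at h
        exact absurd h (Finset.notMem_empty y)

theorem Cn_IsPetri : C.Cn.IsPetri := by
  constructor
  · rw [Finset.disjoint_left]
    intro x hx hx'
    rcases C.Cn_places_mem hx with h1 | ⟨_, h1⟩ | ⟨_, h1⟩ <;>
      rcases C.Cn_trans_mem hx' with h2 | ⟨_, h2⟩ | ⟨_, h2⟩
    · exact (Finset.disjoint_left.1 C.disj (C.adjP_places h1)) (C.hsub h2)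
    · have := C.lt_bb x (Or.inl h1)
      omega
    · have := C.lt_bb x (Or.inl h1)
      omega
    · have := C.lt_bb x (Or.inr h2)
      omega
    · omega
    · omega
    · have := C.lt_bb x (Or.inr h2)
      omega
    · omega
    · omega
  · intro e he
    rcases C.Cn_flow_mem.1 he with h | ⟨hS, (h | h)⟩ | ⟨hE, (h | h)⟩
    · obtain ⟨_, hc⟩ := C.R_flow_mem.1 h
      rcases hc with ⟨h1, h2⟩ | ⟨h1, h2⟩
      · exact Or.inl ⟨C.adjP_mem_Cn h1, C.T_mem_Cn h2⟩
      · exact Or.inr ⟨C.T_mem_Cn h1, C.adjP_mem_Cn h2⟩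
    · rw [h]
      exact Or.inl ⟨C.b_mem_Cn hS, C.b1_mem_Cn hS⟩
    · rw [h]
      exact Or.inr ⟨C.b1_mem_Cn hS, C.adjP_mem_Cn C.ps_mem_adjP⟩
    · rw [h]
      exact Or.inl ⟨C.adjP_mem_Cn C.pe_mem_adjP, C.b3_mem_Cn hE⟩
    · rw [h]
      exact Or.inr ⟨C.b3_mem_Cn hE, C.b2_mem_Cn hE⟩

theorem Cn_source_mem : C.Cn.source ∈ C.Cn.places := by
  rw [C.Cn_source]
  by_cases hS : C.nS
  · rw [if_pos hS]
    exact C.b_mem_Cn hS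
  · rw [if_neg hS]
    exact C.adjP_mem_Cn C.ps_mem_adjP

theorem Cn_sink_mem : C.Cn.sink ∈ C.Cn.places := by
  rw [C.Cn_sink]
  by_cases hE : C.nE
  · rw [if_pos hE]
    exact C.b2_mem_Cn hE
  · rw [if_neg hE]
    exact C.adjP_mem_Cn C.pe_mem_adjP

theorem Cn_pre_unique : ∀ p ∈ C.Cn.places, C.Cn.pre p = ∅ ↔ p = C.Cn.source := by
  intro p hp
  rcases C.Cn_places_mem hp with hadj | ⟨hS, hpb⟩ | ⟨hE, hpb⟩
  · by_cases hps : p = C.ps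
    · subst hps
      rw [C.Cn_pre_ps, C.Cn_source]
      constructor
      · intro h
        by_cases hS : C.nS
        · exfalso
          rw [if_pos hS] at h
          have hmem : C.bb+1 ∈ C.R.pre C.ps ∪ {C.bb+1} :=
            Finset.mem_union_right _ (Finset.mem_singleton_self _)
          rw [h] at hmem
          exact Finset.notMem_empty _ hmem
        · rw [if_neg hS]
      · intro h
        by_cases hS : C.nS
        · exfalso
          rw [if_pos hS] at h
          have := C.ps_lt_bb
          omega
        · rw [if_neg hS, Finset.union_empty, ← Finset.not_nonempty_iff_eq_empty]
          exact hS
    · have hlt := C.lt_bb p (Or.inl hadj)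
      rw [C.Cn_pre_small hlt hps]
      have hne_src : p ≠ C.Cn.source := by
        rw [C.Cn_source]
        by_cases hS : C.nS
        · rw [if_pos hS]
          omega
        · rw [if_neg hS]
          exact hps
      have hnonempty : (C.R.pre p).Nonempty := by
        rcases C.classify hadj with h | h | h
        · exact absurd h hps
        · rw [h, C.R_pre_place C.pe_mem_adjP]
          exact C.pe_spec.2.1
        · rw [C.R_pre_place hadj]
          obtain ⟨x, hx⟩ := h.2.2.1
          exact ⟨x, Finset.mem_inter.2 ⟨hx, h.1 hx⟩⟩
      constructor
      · intro h
        rw [h] at hnonempty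
        exact absurd hnonempty (by simp)
      · intro h
        exact absurd h hne_src
  · subst hpb
    rw [C.Cn_pre_b hS, C.Cn_source, if_pos hS]
    simp
  · subst hpb
    rw [C.Cn_pre_b2 hE, C.Cn_source]
    constructor
    · intro h
      exfalso
      have hmem : C.bb+3 ∈ ({C.bb+3} : Finset ℕ) := Finset.mem_singleton_self _
      exact Finset.notMem_empty _ (h ▸ hmem)
    · intro h
      exfalso
      by_cases hS : C.nS
      · rw [if_pos hS] at h
        omega
      · rw [if_neg hS] at h
        have := C.ps_lt_bb
        omega

theorem Cn_post_unique : ∀ p ∈ C.Cn.places, C.Cn.post p = ∅ ↔ p = C.Cn.sink := by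
  intro p hp
  rcases C.Cn_places_mem hp with hadj | ⟨hS, hpb⟩ | ⟨hE, hpb⟩
  · by_cases hpe : p = C.pe
    · subst hpe
      rw [C.Cn_post_pe, C.Cn_sink]
      constructor
      · intro h
        by_cases hE : C.nE
        · exfalso
          rw [if_pos hE] at h
          have hmem : C.bb+3 ∈ C.R.post C.pe ∪ {C.bb+3} :=
            Finset.mem_union_right _ (Finset.mem_singleton_self _)
          rw [h] at hmem
          exact Finset.notMem_empty _ hmem
        · rw [if_neg hE]
      · intro h
        by_cases hE : C.nE
        · exfalso
          rw [if_pos hE] at h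
          have := C.pe_lt_bb
          omega
        · rw [if_neg hE, Finset.union_empty, ← Finset.not_nonempty_iff_eq_empty]
          exact hE
    · have hlt := C.lt_bb p (Or.inl hadj)
      rw [C.Cn_post_small hlt hpe]
      have hne_sink : p ≠ C.Cn.sink := by
        rw [C.Cn_sink]
        by_cases hE : C.nE
        · rw [if_pos hE]
          omega
        · rw [if_neg hE]
          exact hpe
      have hnonempty : (C.R.post p).Nonempty := by
        rcases C.classify hadj with h | h | h
        · rw [h, C.R_post_place C.ps_mem_adjP]
          exact C.ps_spec.2.1
        · exact absurd h hpe
        · rw [C.R_post_place hadj]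
          obtain ⟨x, hx⟩ := h.2.2.2
          exact ⟨x, Finset.mem_inter.2 ⟨hx, h.2.1 hx⟩⟩
      constructor
      · intro h
        rw [h] at hnonempty
        exact absurd hnonempty (by simp)
      · intro h
        exact absurd h hne_sink
  · subst hpb
    rw [C.Cn_post_b hS, C.Cn_sink]
    constructor
    · intro h
      exfalso
      have hmem : C.bb+1 ∈ ({C.bb+1} : Finset ℕ) := Finset.mem_singleton_self _
      exact Finset.notMem_empty _ (h ▸ hmem)
    · intro h
      exfalso
      by_cases hE : C.nE
      · rw [if_pos hE] at h
        omega
      · rw [if_neg hE] at h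
        have := C.pe_lt_bb
        omega
  · subst hpb
    rw [C.Cn_post_b2 hE, C.Cn_sink, if_pos hE]
    simp

theorem Cn_path_of_R {a c : ℕ} (h : C.R.pathRel a c) : C.Cn.pathRel a c := by
  refine Relation.ReflTransGen.mono ?_ _ _ h
  intro x y hxy
  exact C.Cn_flow_mem.2 (Or.inl hxy)

theorem edge_b_b1 (hS : C.nS) : (C.bb, C.bb+1) ∈ C.Cn.flow :=
  C.Cn_flow_mem.2 (Or.inr (Or.inl ⟨hS, Or.inl rfl⟩))

theorem edge_b1_ps (hS : C.nS) : (C.bb+1, C.ps) ∈ C.Cn.flow :=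
  C.Cn_flow_mem.2 (Or.inr (Or.inl ⟨hS, Or.inr rfl⟩))

theorem edge_pe_b3 (hE : C.nE) : (C.pe, C.bb+3) ∈ C.Cn.flow :=
  C.Cn_flow_mem.2 (Or.inr (Or.inr ⟨hE, Or.inl rfl⟩))

theorem edge_b3_b2 (hE : C.nE) : (C.bb+3, C.bb+2) ∈ C.Cn.flow :=
  C.Cn_flow_mem.2 (Or.inr (Or.inr ⟨hE, Or.inr rfl⟩))

theorem Cn_source_to_ps : C.Cn.pathRel C.Cn.source C.ps := by
  rw [C.Cn_source]
  by_cases hS : C.nS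
  · rw [if_pos hS]
    exact Relation.ReflTransGen.head (C.edge_b_b1 hS)
      (Relation.ReflTransGen.single (C.edge_b1_ps hS))
  · rw [if_neg hS]
    exact Relation.ReflTransGen.refl

theorem Cn_pe_to_sink : C.Cn.pathRel C.pe C.Cn.sink := by
  rw [C.Cn_sink]
  by_cases hE : C.nE
  · rw [if_pos hE]
    exact Relation.ReflTransGen.head (C.edge_pe_b3 hE)
      (Relation.ReflTransGen.single (C.edge_b3_b2 hE))
  · rw [if_neg hE]
    exact Relation.ReflTransGen.refl

theorem Cn_paths_core {y : ℕ} (hy : y ∈ C.N.adjP C.T ∨ y ∈ C.T) :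
    C.Cn.pathRel C.Cn.source y ∧ C.Cn.pathRel y C.Cn.sink := by
  have hpair : C.R.pathRel C.ps y ∧ C.R.pathRel y C.pe := by
    rcases hy with h | h
    · exact C.path_place h
    · exact C.path_trans h
  exact ⟨Relation.ReflTransGen.trans C.Cn_source_to_ps (C.Cn_path_of_R hpair.1),
    Relation.ReflTransGen.trans (C.Cn_path_of_R hpair.2) C.Cn_pe_to_sink⟩

theorem Cn_paths : ∀ x ∈ C.Cn.places ∪ C.Cn.transitions,
    C.Cn.pathRel C.Cn.source x ∧ C.Cn.pathRel x C.Cn.sink := by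
  intro x hx
  have hps_paths := C.Cn_paths_core (Or.inl C.ps_mem_adjP)
  have hpe_paths := C.Cn_paths_core (Or.inl C.pe_mem_adjP)
  rw [Finset.mem_union] at hx
  rcases hx with h | h
  · rcases C.Cn_places_mem h with h1 | ⟨hS, h1⟩ | ⟨hE, h1⟩
    · exact C.Cn_paths_core (Or.inl h1)
    · subst h1
      constructor
      · rw [C.Cn_source, if_pos hS]
        exact Relation.ReflTransGen.refl
      · exact Relation.ReflTransGen.head (C.edge_b_b1 hS)
          (Relation.ReflTransGen.head (C.edge_b1_ps hS) hps_paths.2)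
    · subst h1
      constructor
      · exact Relation.ReflTransGen.trans hpe_paths.1
          (Relation.ReflTransGen.head (C.edge_pe_b3 hE)
            (Relation.ReflTransGen.single (C.edge_b3_b2 hE)))
      · rw [C.Cn_sink, if_pos hE]
        exact Relation.ReflTransGen.refl
  · rcases C.Cn_trans_mem h with h1 | ⟨hS, h1⟩ | ⟨hE, h1⟩
    · exact C.Cn_paths_core (Or.inr h1)
    · subst h1
      constructor
      · rw [C.Cn_source, if_pos hS]
        exact Relation.ReflTransGen.single (C.edge_b_b1 hS)
      · exact Relation.ReflTransGen.head (C.edge_b1_ps hS) hps_paths.2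
    · subst h1
      constructor
      · exact Relation.ReflTransGen.trans hpe_paths.1
          (Relation.ReflTransGen.single (C.edge_pe_b3 hE))
      · rw [C.Cn_sink, if_pos hE]
        exact Relation.ReflTransGen.single (C.edge_b3_b2 hE)

theorem Cn_IsWF : C.Cn.IsWF :=
  ⟨C.Cn_IsPetri, C.Cn_source_mem, C.Cn_sink_mem, C.Cn_pre_unique, C.Cn_post_unique, C.Cn_paths⟩

end CGCtx

/-- The choice-graph projection of a safe and sound WF-net
onto any part of a concurrency-hiding partition is a safe and sound WF-net. -/
theorem cgproject_safe_sound
    (N : Net) (hWF : N.IsWF) (hsafe : N.Safe) (hsound : N.Sound)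
    {n : ℕ} (G : Fin n → Finset ℕ) (hch : ConcurrencyHiding N G) :
    ∀ i : Fin n,
      (cgproject N (G i)).IsWF ∧ (cgproject N (G i)).Safe ∧ (cgproject N (G i)).Sound := by
  intro i
  obtain ⟨hpart, hcards⟩ := hch
  obtain ⟨hE1, hX1⟩ := hcards i
  obtain ⟨ps, hps⟩ := Finset.card_eq_one.1 hE1
  obtain ⟨pe, hpe⟩ := Finset.card_eq_one.1 hX1
  have hsub : G i ⊆ N.transitions := by
    intro t ht
    rw [← hpart.2.2]
    exact Finset.mem_biUnion.2 ⟨i, Finset.mem_univ i, ht⟩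
  let C : CGCtx := ⟨N, G i, ps, pe, hWF, hsafe, hsound, hsub, hps, hpe⟩
  have heq : cgproject N (G i) = C.Cn := C.Cn_eq
  rw [heq]
  exact ⟨C.Cn_IsWF, C.Cn_Safe, C.Cn_Sound⟩

end
end

section
/- Let N = (P,T,F) be a safe and sound WF-net and let G = {T_1,…,T_n} be a conflict-hiding partition of T. Then the transitive closure of the execution order order(N,G) is irreflexive, and hence a strict partial order on {1,…,n}. -/
/-!
Common formalization of Petri nets, workflow nets (WF-nets), POWL 2.0 models,
and the WF-net-to-POWL conversion algorithm.
-/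

noncomputable section
attribute [local instance] Classical.propDecidable

/-! ### Auxiliary lemmas for Statement 7 -/

lemma mem_post_iff' (N : Net) {x y : ℕ} : y ∈ N.post x ↔ (x, y) ∈ N.flow := by
  constructor
  · intro h
    simp only [Net.post, Finset.mem_image, Finset.mem_filter] at h
    obtain ⟨⟨a, b⟩, ⟨hm, h1⟩, h2⟩ := h
    subst h1; subst h2; exact hm
  · intro h
    simp only [Net.post, Finset.mem_image, Finset.mem_filter]
    exact ⟨(x, y), ⟨h, rfl⟩, rfl⟩

lemma mem_pre_iff' (N : Net) {x y : ℕ} : y ∈ N.pre x ↔ (y, x) ∈ N.flow := by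
  constructor
  · intro h
    simp only [Net.pre, Finset.mem_image, Finset.mem_filter] at h
    obtain ⟨⟨a, b⟩, ⟨hm, h1⟩, h2⟩ := h
    subst h1; subst h2; exact hm
  · intro h
    simp only [Net.pre, Finset.mem_image, Finset.mem_filter]
    exact ⟨(y, x), ⟨h, rfl⟩, rfl⟩

lemma firingSeq_append' (N : Net) :
    ∀ (σ₁ : List ℕ) (M₁ M₂ M₃ : Marking) (σ₂ : List ℕ),
      N.firingSeq M₁ σ₁ M₂ → N.firingSeq M₂ σ₂ M₃ → N.firingSeq M₁ (σ₁ ++ σ₂) M₃ := by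
  intro σ₁
  induction σ₁ with
  | nil =>
      intro M₁ M₂ M₃ σ₂ h1 h2
      simp only [Net.firingSeq] at h1
      subst h1
      simpa using h2
  | cons t σ ih =>
      intro M₁ M₂ M₃ σ₂ h1 h2
      obtain ⟨Mm, hf, hs⟩ := h1
      exact ⟨Mm, hf, ih Mm M₂ M₃ σ₂ hs h2⟩

lemma firingSeq_split' (N : Net) :
    ∀ (σ₁ : List ℕ) (M M' : Marking) (σ₂ : List ℕ),
      N.firingSeq M (σ₁ ++ σ₂) M' → ∃ Mm, N.firingSeq M σ₁ Mm ∧ N.firingSeq Mm σ₂ M' := by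
  intro σ₁
  induction σ₁ with
  | nil =>
      intro M M' σ₂ h
      exact ⟨M, rfl, by simpa using h⟩
  | cons t σ ih =>
      intro M M' σ₂ h
      obtain ⟨M₁, hf, hs⟩ := h
      obtain ⟨Mm, h1, h2⟩ := ih M₁ M' σ₂ hs
      exact ⟨Mm, ⟨M₁, hf, h1⟩, h2⟩

lemma firingSeq_mem_transitions' (N : Net) :
    ∀ (σ : List ℕ) (M M' : Marking), N.firingSeq M σ M' → ∀ u ∈ σ, u ∈ N.transitions := by
  intro σ
  induction σ with
  | nil => intro M M' _ u hu; simp at hu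
  | cons t σ ih =>
      intro M M' h u hu
      obtain ⟨M₁, hf, hs⟩ := h
      rcases List.mem_cons.mp hu with h | h
      · subst h; exact hf.1.1
      · exact ih M₁ M' hs u h

/-- Token conservation: if no transition of the sequence produces into `p`,
the number of tokens in `p` cannot grow. -/
lemma firingSeq_no_prod' (N : Net) :
    ∀ (σ : List ℕ) (M M' : Marking), N.firingSeq M σ M' →
      ∀ p, (∀ u ∈ σ, p ∉ N.post u) → M' p ≤ M p := by
  intro σ
  induction σ with
  | nil =>
      intro M M' h p _
      simp only [Net.firingSeq] at h
      subst h; exact le_rfl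
  | cons t σ ih =>
      intro M M' h p hp
      obtain ⟨M₁, hf, hs⟩ := h
      have h1 := hf.2 p
      have hnp : p ∉ N.post t := hp t List.mem_cons_self
      have h2 : M₁ p ≤ M p := by
        rw [if_neg hnp] at h1
        by_cases hpre : p ∈ N.pre t
        · rw [if_pos hpre] at h1; omega
        · rw [if_neg hpre] at h1; omega
      have h3 := ih M₁ M' hs p (fun u hu => hp u (List.mem_cons_of_mem t hu))
      omega

/-- Split off the first element of a list satisfying a predicate. -/
lemma first_split' {α : Type*} (P : α → Prop) :
    ∀ l : List α, (∃ x ∈ l, P x) →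
      ∃ (l₁ : List α) (x : α) (l₂ : List α), l = l₁ ++ x :: l₂ ∧ P x ∧ ∀ y ∈ l₁, ¬ P y := by
  intro l
  induction l with
  | nil => rintro ⟨x, hx, _⟩; simp at hx
  | cons a l ih =>
      rintro ⟨x, hx, hPx⟩
      by_cases ha : P a
      · exact ⟨[], a, l, rfl, ha, by simp⟩
      · have hxl : x ∈ l := by
          rcases List.mem_cons.mp hx with h | h
          · subst h; exact absurd hPx ha
          · exact h
        obtain ⟨l₁, y, l₂, hdec, hPy, hl₁⟩ := ih ⟨x, hxl, hPx⟩
        refine ⟨a :: l₁, y, l₂, by simp [hdec], hPy, ?_⟩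
        intro z hz
        rcases List.mem_cons.mp hz with h | h
        · subst h; exact ha
        · exact hl₁ z h

/-- Key lemma: if `j ⊏ k`, then before the first firing of a transition of
`T_k` in any run from the initial marking, some transition of `T_j` fires. -/
lemma exec_step_before (N : Net) (hWF : N.IsWF) {n : ℕ} (G : Fin n → Finset ℕ)
    (hch : ConflictHiding N G) {j k : Fin n} (hjk : execOrder N G j k)
    (σ₁ : List ℕ) (t : ℕ) (σ₂ : List ℕ) (M : Marking)
    (hfs : N.firingSeq N.initM (σ₁ ++ t :: σ₂) M)
    (ht : t ∈ G k) (hfirst : ∀ u ∈ σ₁, u ∉ G k) :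
    ∃ u ∈ σ₁, u ∈ G j := by
  obtain ⟨hPetri, hsrcP, hsinkP, hpreSrc, hpostSink, hpath⟩ := hWF
  obtain ⟨hpart, hentU, hexitU, hentE, hexitE⟩ := hch
  have hGsub : ∀ (i : Fin n), G i ⊆ N.transitions := by
    intro i x hx
    rw [← hpart.2.2]
    exact Finset.mem_biUnion.mpr ⟨i, Finset.mem_univ i, hx⟩
  have htT : t ∈ N.transitions := hGsub k ht
  -- split the firing sequence
  obtain ⟨M₁, hσ₁, hrest⟩ := firingSeq_split' N σ₁ N.initM M (t :: σ₂) hfs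
  obtain ⟨M₂, hfire, -⟩ := hrest
  have henab : N.enabled t M₁ := hfire.1
  -- the boundary place p
  obtain ⟨p, hp⟩ := hjk
  rw [Finset.mem_inter] at hp
  obtain ⟨hpx, hpe⟩ := hp
  have hpxU := hpx
  have hpeU := hpe
  rw [Net.exit, Finset.mem_filter] at hpxU
  -- pre t is nonempty: use the WF path from the source
  have hsrc_ne_t : N.source ≠ t := by
    intro h
    exact (Finset.disjoint_left.mp hPetri.1 hsrcP) (h ▸ htT)
  have hpath_t := (hpath t (Finset.mem_union_right _ htT)).1
  have hpre_t : ∃ q, q ∈ N.pre t := by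
    rcases Relation.ReflTransGen.cases_tail hpath_t with h | ⟨c, _, hc⟩
    · exact absurd h.symm hsrc_ne_t
    · exact ⟨c, (mem_pre_iff' N).mpr hc⟩
  obtain ⟨q, hq⟩ := hpre_t
  have hqflow : (q, t) ∈ N.flow := (mem_pre_iff' N).mp hq
  have hqP : q ∈ N.places := by
    rcases hPetri.2 (q, t) hqflow with h | h
    · exact h.1
    · exact absurd h.2 (Finset.disjoint_right.mp hPetri.1 htT)
  -- the token in a place ≠ source must come from a producer in σ₁
  have producer : ∀ r, r ≠ N.source → 1 ≤ M₁ r → ∃ u ∈ σ₁, r ∈ N.post u := by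
    intro r hr hM
    by_contra hcon
    push_neg at hcon
    have := firingSeq_no_prod' N σ₁ N.initM M₁ hσ₁ r hcon
    simp only [Net.initM, if_neg hr] at this
    omega
  -- q is an entry point of G k
  have hqent : q ∈ N.entry (G k) := by
    rw [Net.entry, Finset.mem_filter]
    refine ⟨hqP, ⟨t, Finset.mem_inter.mpr ⟨(mem_post_iff' N).mpr hqflow, ht⟩⟩, ?_⟩
    by_cases hqs : q = N.source
    · exact Or.inl hqs
    · refine Or.inr ?_
      obtain ⟨u, hu, hupost⟩ := producer q hqs (henab.2 q hq)
      refine ⟨u, Finset.mem_inter.mpr ⟨(mem_pre_iff' N).mpr ((mem_post_iff' N).mp hupost), ?_⟩⟩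
      rw [Finset.mem_sdiff]
      exact ⟨firingSeq_mem_transitions' N σ₁ N.initM M₁ hσ₁ u hu, hfirst u hu⟩
  -- by entry-equivalence, t consumes from p as well
  have hequiv := hentE k q hqent p hpe
  have htpostp : t ∈ N.post p := by
    have : t ∈ N.post q ∩ G k :=
      Finset.mem_inter.mpr ⟨(mem_post_iff' N).mpr hqflow, ht⟩
    rw [hequiv.2] at this
    exact (Finset.mem_inter.mp this).1
  have hppret : p ∈ N.pre t := (mem_pre_iff' N).mpr ((mem_post_iff' N).mp htpostp)
  -- p is not the source
  have hpP : p ∈ N.places := hpxU.1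
  have hps : p ≠ N.source := by
    intro h
    obtain ⟨w, hw⟩ := hpxU.2.1
    have : N.pre p = ∅ := (hpreSrc p hpP).mpr h
    rw [this] at hw
    simp at hw
  -- the token in p was produced by some u in σ₁
  obtain ⟨u, huσ, hupost⟩ := producer p hps (henab.2 p hppret)
  have huT : u ∈ N.transitions := firingSeq_mem_transitions' N σ₁ N.initM M₁ hσ₁ u huσ
  have hunk : u ∉ G k := hfirst u huσ
  -- u belongs to some part G l
  have : u ∈ Finset.univ.biUnion G := hpart.2.2 ▸ huT
  obtain ⟨l, -, hul⟩ := Finset.mem_biUnion.mp this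
  have hlk : l ≠ k := fun h => hunk (h ▸ hul)
  -- p is an exit point of G l, hence l = j by conflict-hiding
  have hpxl : p ∈ N.exit (G l) := by
    rw [Net.exit, Finset.mem_filter]
    refine ⟨hpP, ⟨u, Finset.mem_inter.mpr
      ⟨(mem_pre_iff' N).mpr ((mem_post_iff' N).mp hupost), hul⟩⟩, Or.inr ?_⟩
    refine ⟨t, Finset.mem_inter.mpr ⟨htpostp, ?_⟩⟩
    rw [Finset.mem_sdiff]
    refine ⟨htT, fun htl => ?_⟩
    exact (Finset.disjoint_left.mp (hpart.2.1 l k hlk) htl) ht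
  have hlj : l = j := hexitU p l j hpxl hpx
  exact ⟨u, huσ, hlj ▸ hul⟩

/-- Transitive version of `exec_step_before`. -/
lemma exec_transGen_before (N : Net) (hWF : N.IsWF) {n : ℕ} (G : Fin n → Finset ℕ)
    (hch : ConflictHiding N G) {j k : Fin n}
    (h : Relation.TransGen (execOrder N G) j k) :
    ∀ (σ₁ : List ℕ) (t : ℕ) (σ₂ : List ℕ) (M : Marking),
      N.firingSeq N.initM (σ₁ ++ t :: σ₂) M →
      t ∈ G k → (∀ u ∈ σ₁, u ∉ G k) → ∃ u ∈ σ₁, u ∈ G j := by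
  induction h using Relation.TransGen.head_induction_on with
  | single h =>
      intro σ₁ t σ₂ M hfs ht hf
      exact exec_step_before N hWF G hch h σ₁ t σ₂ M hfs ht hf
  | head h' h ihstep =>
      intro σ₁ t σ₂ M hfs ht hf
      obtain ⟨u, hu, huG⟩ := ihstep σ₁ t σ₂ M hfs ht hf
      obtain ⟨ρ₁, t', ρ₂, hdec, ht', hρ⟩ := first_split' (· ∈ G _) σ₁ ⟨u, hu, huG⟩
      have hfs' : N.firingSeq N.initM (ρ₁ ++ t' :: (ρ₂ ++ t :: σ₂)) M := by
        rw [hdec] at hfs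
        simpa [List.append_assoc] using hfs
      obtain ⟨u', hu', hu'G⟩ :=
        exec_step_before N hWF G hch h' ρ₁ t' (ρ₂ ++ t :: σ₂) M hfs' ht' hρ
      refine ⟨u', ?_, hu'G⟩
      rw [hdec]
      exact List.mem_append.mpr (Or.inl hu')

/-- For a conflict-hiding partition of a safe and sound
WF-net, the transitive closure of the execution order order(N,G) is
irreflexive, hence (being transitive) a strict partial order on {1,…,n}. -/
theorem execOrder_transGen_strict_order
    (N : Net) (hWF : N.IsWF) (hsafe : N.Safe) (hsound : N.Sound)
    {n : ℕ} (G : Fin n → Finset ℕ) (hch : ConflictHiding N G) :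
    Irreflexive (Relation.TransGen (execOrder N G)) ∧
    Transitive (Relation.TransGen (execOrder N G)) := by
  refine ⟨?_, fun _ _ _ h1 h2 => Relation.TransGen.trans h1 h2⟩
  intro i hii
  -- pick a transition of G i; by soundness it fires in some run
  obtain ⟨t, ht⟩ := hch.1.1 i
  have htT : t ∈ N.transitions := by
    rw [← hch.1.2.2]
    exact Finset.mem_biUnion.mpr ⟨i, Finset.mem_univ i, ht⟩
  obtain ⟨M, ⟨σ, hσ⟩, henab⟩ := hsound.1 t htT
  -- fire t at the end of the run
  set M' : Marking := fun p =>
    M p + (if p ∈ N.post t then 1 else 0) - (if p ∈ N.pre t then 1 else 0) with hM'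
  have hfire : N.fire t M M' := by
    refine ⟨henab, fun p => ?_⟩
    have hMp : M' p = M p + (if p ∈ N.post t then 1 else 0) - (if p ∈ N.pre t then 1 else 0) := rfl
    by_cases hpre : p ∈ N.pre t
    · have h1 := henab.2 p hpre
      rw [hMp, if_pos hpre]
      by_cases hpost : p ∈ N.post t
      · rw [if_pos hpost]; omega
      · rw [if_neg hpost]; omega
    · rw [hMp, if_neg hpre]
      by_cases hpost : p ∈ N.post t
      · rw [if_pos hpost]; omega
      · rw [if_neg hpost]; omega
  have hrun : N.firingSeq N.initM (σ ++ [t]) M' :=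
    firingSeq_append' N σ N.initM M M' [t] hσ ⟨M', hfire, rfl⟩
  -- split off the first occurrence of a G i transition in the run
  have htmem : ∃ x ∈ σ ++ [t], x ∈ G i := ⟨t, by simp, ht⟩
  obtain ⟨σ₁, t₀, σ₂, hdec, ht₀, hσ₁⟩ := first_split' (· ∈ G i) (σ ++ [t]) htmem
  rw [hdec] at hrun
  obtain ⟨u, hu, huG⟩ := exec_transGen_before N hWF G hch hii σ₁ t₀ σ₂ M' hrun ht₀ hσ₁
  exact hσ₁ u hu huG

end
end
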